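/- arXiv:2510.26587 — 9 statements merged into one kernel-verified Lean document; each statement's English description precedes it below -/
import Mathlib

section
/- The minimum over all matrix-vector decompositions of a tensor T of the rank of the decomposition equals the tensor rank of T. -/
open Matrix BigOperators Polynomial

variable {K : Type*} [Field K]

/-- Tensor rank: smallest `r` such that `T` is a sum of `r` rank-one tensors. -/
noncomputable def tensorRank {m n p : ℕ} (T : Fin m → Fin n → Fin p → K) : ℕ :=
  sInf {r | ∃ (u : Fin r → Fin m → K) (v : Fin r → Fin n → K) (w : Fin r → Fin p → K),
    T = fun a b c => ∑ i, u i a * v i b * w i c}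

/-- Matrix-vector decomposition: `T = ∑ M ℓ ⊗ w ℓ` with nonzero matrices,
nonzero and pairwise non-collinear vectors. -/
def IsMVDecomp {m n p q : ℕ} (T : Fin m → Fin n → Fin p → K)
    (M : Fin q → Matrix (Fin m) (Fin n) K) (w : Fin q → Fin p → K) : Prop :=
  (∀ ℓ, M ℓ ≠ 0) ∧ (∀ ℓ, w ℓ ≠ 0) ∧
  (∀ ℓ ℓ' : Fin q, ℓ ≠ ℓ' → ∀ c : K, w ℓ' ≠ c • w ℓ) ∧
  T = fun a b c => ∑ ℓ, M ℓ a b * w ℓ c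

/-- Column space of a matrix. -/
noncomputable def colSpace {m n : ℕ} (M : Matrix (Fin m) (Fin n) K) :
    Submodule K (Fin m → K) := LinearMap.range M.mulVecLin

/-- A finite family of subspaces is in direct sum. -/
def DirectSumFamily {q : ℕ} {W : Type*} [AddCommGroup W] [Module K W]
    (E : Fin q → Submodule K W) : Prop :=
  ∀ x : Fin q → W, (∀ ℓ, x ℓ ∈ E ℓ) → (∑ ℓ, x ℓ) = 0 → ∀ ℓ, x ℓ = 0

/-- The 3-slices of an order-3 tensor. -/
def slice3 {m n p : ℕ} (T : Fin m → Fin n → Fin p → K) (k : Fin p) :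
    Matrix (Fin m) (Fin n) K := fun i j => T i j k



section Helpers

lemma myRank_add_le {m n : ℕ} (A B : Matrix (Fin m) (Fin n) K) :
    (A + B).rank ≤ A.rank + B.rank := by
  classical
  have h : LinearMap.range (A + B).mulVecLin ≤
      LinearMap.range A.mulVecLin ⊔ LinearMap.range B.mulVecLin := by
    rintro x ⟨y, rfl⟩
    simp only [Matrix.mulVecLin_add, LinearMap.add_apply]
    exact Submodule.add_mem_sup ⟨y, rfl⟩ ⟨y, rfl⟩
  calc (A + B).rank = Module.finrank K (LinearMap.range (A + B).mulVecLin) := rfl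
    _ ≤ Module.finrank K (↥(LinearMap.range A.mulVecLin ⊔ LinearMap.range B.mulVecLin)) :=
        Submodule.finrank_mono h
    _ ≤ _ := Submodule.finrank_add_le_finrank_add_finrank _ _

lemma myRank_sum_le {m n : ℕ} {ι : Type*} (s : Finset ι) (f : ι → Matrix (Fin m) (Fin n) K) :
    (∑ i ∈ s, f i).rank ≤ ∑ i ∈ s, (f i).rank := by
  classical
  induction s using Finset.cons_induction with
  | empty => simp [Matrix.rank_zero]
  | cons a s ha ih =>
      rw [Finset.sum_cons, Finset.sum_cons]
      exact le_trans (myRank_add_le _ _) (add_le_add_right ih _)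

lemma myRank_vecMulVec_le {m n : ℕ} (x : Fin m → K) (y : Fin n → K) :
    (vecMulVec x y).rank ≤ 1 := by
  rw [Matrix.vecMulVec_eq Unit]
  exact le_trans (Matrix.rank_mul_le_left _ _)
    (le_trans (Matrix.rank_le_card_width _) (by simp))

lemma myRank_smul_vecMulVec_le {m n : ℕ} (c : K) (x : Fin m → K) (y : Fin n → K) :
    (c • vecMulVec x y).rank ≤ 1 := by
  have : c • vecMulVec x y = vecMulVec (c • x) y := by
    ext a b; simp [Matrix.vecMulVec_apply, mul_assoc]
  rw [this]; exact myRank_vecMulVec_le _ _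

/-- Rank-one decomposition of a matrix. -/
lemma matrix_rank_one_decomp {m n : ℕ} (M : Matrix (Fin m) (Fin n) K) :
    ∃ (u : Fin M.rank → Fin m → K) (v : Fin M.rank → Fin n → K),
      ∀ a b, M a b = ∑ i, u i a * v i b := by
  classical
  set V := LinearMap.range M.mulVecLin with hV
  let b : Module.Basis (Fin M.rank) K V := Module.finBasis K V
  have hcol : ∀ j : Fin n, M.mulVec (Pi.single j 1) ∈ V := fun j => ⟨Pi.single j 1, rfl⟩
  refine ⟨fun i => (b i : Fin m → K),
    fun i j => b.repr ⟨M.mulVec (Pi.single j 1), hcol j⟩ i, fun a j => ?_⟩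
  have h1 : M a j = M.mulVec (Pi.single j 1) a := by
    simp [Matrix.mulVec, dotProduct, Pi.single_apply, mul_comm]
  rw [h1]
  have h2 := b.sum_repr ⟨M.mulVec (Pi.single j 1), hcol j⟩
  have h3 : M.mulVec (Pi.single j 1) =
      ∑ i, b.repr ⟨M.mulVec (Pi.single j 1), hcol j⟩ i • (b i : Fin m → K) := by
    have h4 := congrArg Subtype.val h2
    simp only [Submodule.coe_sum, Submodule.coe_smul] at h4
    exact h4.symm
  rw [h3, Finset.sum_apply]
  simp [mul_comm]

end Helpers

/-- membership in tensor-rank set from arbitrary finite index type -/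
lemma tensorRank_mem {m n p : ℕ} (T : Fin m → Fin n → Fin p → K) {ι : Type*} [Fintype ι]
    (u : ι → Fin m → K) (v : ι → Fin n → K) (w : ι → Fin p → K)
    (hT : T = fun a b c => ∑ i, u i a * v i b * w i c) :
    Fintype.card ι ∈ {r | ∃ (u : Fin r → Fin m → K) (v : Fin r → Fin n → K)
      (w : Fin r → Fin p → K), T = fun a b c => ∑ i, u i a * v i b * w i c} := by
  classical
  let e := (Fintype.equivFin ι).symm
  refine ⟨u ∘ e, v ∘ e, w ∘ e, ?_⟩
  rw [hT]
  funext a b c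
  exact (e.sum_comp fun i => u i a * v i b * w i c).symm

lemma tensorRank_set_nonempty {m n p : ℕ} (T : Fin m → Fin n → Fin p → K) :
    {r | ∃ (u : Fin r → Fin m → K) (v : Fin r → Fin n → K)
      (w : Fin r → Fin p → K), T = fun a b c => ∑ i, u i a * v i b * w i c}.Nonempty := by
  classical
  refine ⟨_, tensorRank_mem T (ι := Fin m × Fin n × Fin p)
    (fun i => Pi.single i.1 1) (fun i => Pi.single i.2.1 1)
    (fun i c' => if c' = i.2.2 then T i.1 i.2.1 i.2.2 else 0) ?_⟩
  funext a b c
  rw [Fintype.sum_prod_type]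
  simp [Pi.single_apply, mul_ite, ite_mul, Finset.sum_ite_eq, Finset.sum_ite_eq', Fintype.sum_prod_type]

/-- From an MV decomposition, a tensor decomposition with `∑ rank` terms. -/
lemma mv_to_tensor {m n p q : ℕ} (T : Fin m → Fin n → Fin p → K)
    (M : Fin q → Matrix (Fin m) (Fin n) K) (w : Fin q → Fin p → K)
    (h : IsMVDecomp T M w) :
    (∑ ℓ, (M ℓ).rank) ∈ {r | ∃ (u : Fin r → Fin m → K) (v : Fin r → Fin n → K)
      (w : Fin r → Fin p → K), T = fun a b c => ∑ i, u i a * v i b * w i c} := by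
  classical
  obtain ⟨-, -, -, hT⟩ := h
  choose u v huv using fun ℓ => matrix_rank_one_decomp (M ℓ)
  have hcard : Fintype.card (Σ ℓ : Fin q, Fin ((M ℓ).rank)) = ∑ ℓ, (M ℓ).rank := by
    simp [Fintype.card_sigma]
  have := tensorRank_mem T (ι := Σ ℓ : Fin q, Fin ((M ℓ).rank))
    (fun i => u i.1 i.2) (fun i => v i.1 i.2) (fun i => w i.1) ?_
  · rwa [hcard] at this
  · rw [hT]
    funext a b c
    conv_rhs => rw [← Finset.univ_sigma_univ]
    rw [Finset.sum_sigma]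
    exact Finset.sum_congr rfl fun ℓ _ => by rw [huv ℓ a b, Finset.sum_mul]

lemma grouping {m n p r : ℕ} (T : Fin m → Fin n → Fin p → K)
    (u : Fin r → Fin m → K) (v : Fin r → Fin n → K) (w : Fin r → Fin p → K)
    (hT : T = fun a b c => ∑ i, u i a * v i b * w i c) :
    ∃ s ∈ {s | ∃ (q : ℕ) (M : Fin q → Matrix (Fin m) (Fin n) K) (w : Fin q → Fin p → K),
      IsMVDecomp T M w ∧ (∑ ℓ, (M ℓ).rank) = s}, s ≤ r := by
  classical
  set g : Fin r → Submodule K (Fin p → K) := fun i => Submodule.span K {w i} with hg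
  set Lines : Finset (Submodule K (Fin p → K)) :=
    (Finset.univ.filter (fun i => w i ≠ 0)).image g with hLines
  have hex : ∀ L ∈ Lines, ∃ i, w i ≠ 0 ∧ g i = L := by
    intro L hL
    simp only [hLines, Finset.mem_image, Finset.mem_filter, Finset.mem_univ, true_and] at hL
    obtain ⟨i, h1, h2⟩ := hL
    exact ⟨i, h1, h2⟩
  set wrep : Submodule K (Fin p → K) → (Fin p → K) := fun L =>
    if h : ∃ i, w i ≠ 0 ∧ g i = L then w h.choose else 0 with hwrepdef
  have hwrep : ∀ L ∈ Lines, wrep L ≠ 0 ∧ Submodule.span K {wrep L} = L := by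
    intro L hL
    have h := hex L hL
    simp only [hwrepdef, dif_pos h]
    exact ⟨h.choose_spec.1, h.choose_spec.2⟩
  -- coefficients
  have hco : ∀ i : Fin r, w i ≠ 0 → ∃ c : K, w i = c • wrep (g i) := by
    intro i hi
    have hL : g i ∈ Lines := Finset.mem_image_of_mem g (by simp [hi])
    obtain ⟨h1, h2⟩ := hwrep (g i) hL
    have hmem : w i ∈ Submodule.span K {wrep (g i)} := by
      rw [h2]; exact Submodule.mem_span_singleton_self (w i)
    obtain ⟨c, hc⟩ := Submodule.mem_span_singleton.mp hmem
    exact ⟨c, hc.symm⟩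
  set coef : Fin r → K := fun i => if h : w i ≠ 0 then (hco i h).choose else 0 with hcoefdef
  have hcoef : ∀ i : Fin r, w i ≠ 0 → w i = coef i • wrep (g i) := by
    intro i hi
    simp only [hcoefdef, dif_pos hi]
    exact (hco i hi).choose_spec
  -- matrices
  set Mf : Submodule K (Fin p → K) → Matrix (Fin m) (Fin n) K := fun L =>
    ∑ i ∈ Finset.univ.filter (fun i => w i ≠ 0 ∧ g i = L), coef i • vecMulVec (u i) (v i)
    with hMfdef
  -- T as a sum over Lines
  have hTL : ∀ a b c, T a b c = ∑ L ∈ Lines, Mf L a b * wrep L c := by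
    intro a b c
    have step1 : T a b c = ∑ i ∈ Finset.univ.filter (fun i => w i ≠ 0),
        u i a * v i b * w i c := by
      rw [hT]
      rw [Finset.sum_filter_of_ne]
      intro i _ hne
      intro h0
      apply hne
      simp [h0]
    rw [step1, ← Finset.sum_fiberwise_of_maps_to (g := g) (t := Lines)
      (fun i hi => Finset.mem_image_of_mem g hi)]
    refine Finset.sum_congr rfl fun L hL => ?_
    have hfil : (Finset.univ.filter (fun i => w i ≠ 0)).filter (fun i => g i = L)
        = Finset.univ.filter (fun i => w i ≠ 0 ∧ g i = L) := by
      rw [Finset.filter_filter]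
    rw [hfil, hMfdef]
    simp only [Finset.sum_apply, Matrix.sum_apply, Finset.sum_mul]
    refine Finset.sum_congr rfl fun i hi => ?_
    simp only [Finset.mem_filter, Finset.mem_univ, true_and] at hi
    have hwi := hcoef i hi.1
    rw [hi.2] at hwi
    simp only [Matrix.smul_apply, Matrix.vecMulVec_apply, smul_eq_mul]
    conv_lhs => rw [hwi]
    simp only [Pi.smul_apply, smul_eq_mul]
    ring
  set goodLines : Finset (Submodule K (Fin p → K)) :=
    Lines.filter (fun L => Mf L ≠ 0) with hgooddef
  refine ⟨∑ L ∈ goodLines, (Mf L).rank, ?_, ?_⟩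
  · -- membership
    set e : Fin goodLines.card ≃ {x // x ∈ goodLines} := goodLines.equivFin.symm with hedef
    refine ⟨goodLines.card, fun ℓ => Mf (e ℓ), fun ℓ => wrep (e ℓ), ⟨?_, ?_, ?_, ?_⟩, ?_⟩
    · intro ℓ
      exact (Finset.mem_filter.mp (e ℓ).2).2
    · intro ℓ
      exact (hwrep _ (Finset.mem_filter.mp (e ℓ).2).1).1
    · intro ℓ ℓ' hne c hEq
      have hL := (e ℓ).2
      have hL' := (e ℓ').2
      rw [Finset.mem_filter] at hL hL'
      have h1 := hwrep _ hL.1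
      have h2 := hwrep _ hL'.1
      have hc0 : c ≠ 0 := by
        rintro rfl
        rw [zero_smul] at hEq
        exact h2.1 hEq
      simp only at hEq
      have : ((e ℓ' : Submodule K (Fin p → K))) = (e ℓ : Submodule K (Fin p → K)) := by
        rw [← h2.2, ← h1.2, hEq,
          Submodule.span_singleton_smul_eq (isUnit_iff_ne_zero.mpr hc0)]
      exact hne (e.injective (Subtype.ext this.symm))
    · funext a b c
      rw [hTL a b c]
      have hdrop : ∑ L ∈ Lines, Mf L a b * wrep L c
          = ∑ L ∈ goodLines, Mf L a b * wrep L c := by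
        refine (Finset.sum_subset (Finset.filter_subset _ _) ?_).symm
        intro L hL hnL
        rw [Finset.mem_filter] at hnL
        push_neg at hnL
        have : Mf L = 0 := hnL hL
        rw [this]
        simp
      rw [hdrop, ← Finset.sum_coe_sort goodLines (fun L => Mf L a b * wrep L c)]
      exact (e.sum_comp fun L => Mf (L : Submodule K (Fin p → K)) a b * wrep L c).symm
    · rw [← Finset.sum_coe_sort goodLines (fun L => (Mf L).rank)]
      exact e.sum_comp fun L => (Mf (L : Submodule K (Fin p → K))).rank
  · -- bound
    calc ∑ L ∈ goodLines, (Mf L).rank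
        ≤ ∑ L ∈ Lines, (Mf L).rank :=
          Finset.sum_le_sum_of_subset (Finset.filter_subset _ _)
      _ ≤ ∑ L ∈ Lines, (Finset.univ.filter (fun i => w i ≠ 0 ∧ g i = L)).card := by
          refine Finset.sum_le_sum fun L _ => ?_
          refine le_trans (myRank_sum_le _ _) ?_
          calc ∑ i ∈ Finset.univ.filter (fun i => w i ≠ 0 ∧ g i = L),
                (coef i • vecMulVec (u i) (v i)).rank
              ≤ ∑ _i ∈ Finset.univ.filter (fun i => w i ≠ 0 ∧ g i = L), 1 :=
                Finset.sum_le_sum fun i _ => myRank_smul_vecMulVec_le _ _ _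
            _ = _ := by simp
      _ = (Finset.univ.filter (fun i => w i ≠ 0)).card := by
          rw [Finset.card_eq_sum_card_fiberwise
            (f := g) (t := Lines) (fun i hi => Finset.mem_image_of_mem g hi)]
          refine Finset.sum_congr rfl fun L _ => ?_
          rw [Finset.filter_filter]
      _ ≤ r := by
          refine le_trans (Finset.card_filter_le _ _) ?_
          simp

theorem mvRank_min_eq_tensorRank {m n p : ℕ} (T : Fin m → Fin n → Fin p → K) :
    sInf {s | ∃ (q : ℕ) (M : Fin q → Matrix (Fin m) (Fin n) K) (w : Fin q → Fin p → K),
      IsMVDecomp T M w ∧ (∑ ℓ, (M ℓ).rank) = s} = tensorRank T := by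
  classical
  have htr : tensorRank T ∈ {r | ∃ (u : Fin r → Fin m → K) (v : Fin r → Fin n → K)
      (w : Fin r → Fin p → K), T = fun a b c => ∑ i, u i a * v i b * w i c} :=
    Nat.sInf_mem (tensorRank_set_nonempty T)
  obtain ⟨u, v, w, hT⟩ := htr
  obtain ⟨s, hsA, hsle⟩ := grouping T u v w hT
  apply le_antisymm
  · exact le_trans (Nat.sInf_le hsA) hsle
  · have hA : sInf {s | ∃ (q : ℕ) (M : Fin q → Matrix (Fin m) (Fin n) K)
        (w : Fin q → Fin p → K), IsMVDecomp T M w ∧ (∑ ℓ, (M ℓ).rank) = s} ∈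
        {s | ∃ (q : ℕ) (M : Fin q → Matrix (Fin m) (Fin n) K)
        (w : Fin q → Fin p → K), IsMVDecomp T M w ∧ (∑ ℓ, (M ℓ).rank) = s} :=
      Nat.sInf_mem ⟨s, hsA⟩
    obtain ⟨q, M, w', hMV, hsum⟩ := hA
    have hmem := mv_to_tensor T M w' hMV
    rw [hsum] at hmem
    exact Nat.sInf_le hmem
end

section
/- Suppose a tensor T of rank r admits a unique decomposition T = Σ_{ℓ=1}^r (u_ℓ ⊗ v_ℓ) ⊗ w_ℓ as a sum of r rank-one tensors (unique up to permutation and scaling of factors). Then no two vectors w_ℓ in this decomposition are collinear, and this decomposition is also the unique matrix-vector decomposition of T of rank r. -/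
open Matrix BigOperators Polynomial

variable {K : Type*} [Field K]

/-- rank-one proportionality: third factor. -/
lemma prop3 {m n p : ℕ} {x x' : Fin m → K} {y y' : Fin n → K} {z z' : Fin p → K}
    (h : ∀ a b c, x a * y b * z c = x' a * y' b * z' c)
    (hx : x ≠ 0) (hy : y ≠ 0) (hz : z ≠ 0) :
    ∃ d : K, d ≠ 0 ∧ z' = d • z := by
  obtain ⟨a0, ha0⟩ := Function.ne_iff.mp hx
  obtain ⟨b0, hb0⟩ := Function.ne_iff.mp hy
  obtain ⟨c0, hc0⟩ := Function.ne_iff.mp hz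
  simp only [Pi.zero_apply] at ha0 hb0 hc0
  set α := x a0 * y b0 with hα
  set β := x' a0 * y' b0 with hβ
  have hαne : α ≠ 0 := mul_ne_zero ha0 hb0
  have hβne : β ≠ 0 := by
    intro h0
    have := h a0 b0 c0
    rw [← hα, ← hβ, h0, zero_mul] at this
    exact (mul_ne_zero hαne hc0) this
  refine ⟨α / β, div_ne_zero hαne hβne, ?_⟩
  funext c
  have := h a0 b0 c
  rw [← hα, ← hβ] at this
  rw [Pi.smul_apply, smul_eq_mul, div_mul_eq_mul_div, eq_div_iff hβne]
  linear_combination -this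

lemma rank_pos_of_ne_zero {m n : ℕ} {M : Matrix (Fin m) (Fin n) K} (h : M ≠ 0) :
    0 < M.rank := by
  rcases Nat.eq_zero_or_pos M.rank with h1 | h1
  · exfalso
    apply h
    have hbot : LinearMap.range M.mulVecLin = ⊥ := by
      rwa [Matrix.rank, Submodule.finrank_eq_zero] at h1
    have h0 : M.mulVecLin = 0 := LinearMap.range_eq_bot.mp hbot
    ext i j
    have h2 : M *ᵥ Pi.single j 1 = 0 := by
      have := congrArg (fun f => f (Pi.single j 1)) h0
      simpa using this
    have h3 := congrFun (M.mulVec_single_one j) i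
    rw [h2] at h3
    simpa using h3.symm
  · exact h1

lemma mulVec_vecMulVec {m n : ℕ} (x : Fin m → K) (y : Fin n → K) (z : Fin n → K) :
    vecMulVec x y *ᵥ z = (y ⬝ᵥ z) • x := by
  funext i
  simp [Matrix.mulVec, dotProduct, Matrix.vecMulVec_apply, Finset.mul_sum,
    Finset.sum_mul, mul_assoc, mul_comm, mul_left_comm]

lemma range_vecMulVec {m n : ℕ} {x : Fin m → K} {y : Fin n → K} (hy : y ≠ 0) :
    LinearMap.range (vecMulVec x y).mulVecLin = Submodule.span K {x} := by
  obtain ⟨j0, hj0⟩ := Function.ne_iff.mp hy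
  simp only [Pi.zero_apply] at hj0
  apply le_antisymm
  · rintro _ ⟨z, rfl⟩
    rw [Matrix.mulVecLin_apply, mulVec_vecMulVec]
    exact Submodule.smul_mem _ _ (Submodule.mem_span_singleton_self x)
  · rw [Submodule.span_le, Set.singleton_subset_iff]
    refine ⟨Pi.single j0 (y j0)⁻¹, ?_⟩
    rw [Matrix.mulVecLin_apply, mulVec_vecMulVec]
    have : y ⬝ᵥ Pi.single j0 (y j0)⁻¹ = 1 := by
      simp [dotProduct, Pi.single_apply, Finset.sum_ite_eq', mul_inv_cancel₀ hj0]
    rw [this, one_smul]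

lemma rank_vecMulVec_eq_one {m n : ℕ} {x : Fin m → K} {y : Fin n → K}
    (hx : x ≠ 0) (hy : y ≠ 0) : (vecMulVec x y).rank = 1 := by
  rw [Matrix.rank, range_vecMulVec hy]
  exact finrank_span_singleton hx

lemma exists_rankOne_decomp {m n : ℕ} (M : Matrix (Fin m) (Fin n) K) :
    ∃ (a : Fin M.rank → Fin m → K) (b : Fin M.rank → Fin n → K),
      (∀ i, a i ≠ 0) ∧ (∀ i, b i ≠ 0) ∧ M = ∑ i, vecMulVec (a i) (b i) := by
  set V := LinearMap.range M.mulVecLin with hV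
  have hfr : Module.finrank K V = M.rank := rfl
  let B : Module.Basis (Fin M.rank) K V := Module.finBasisOfFinrankEq K V hfr
  have hcol : ∀ j : Fin n, Mᵀ j ∈ V := fun j =>
    ⟨Pi.single j 1, M.mulVec_single_one j⟩
  let colV : Fin n → V := fun j => ⟨Mᵀ j, hcol j⟩
  refine ⟨fun i => (B i : Fin m → K), fun i j => B.repr (colV j) i, ?_, ?_, ?_⟩
  · intro i hzero
    exact B.ne_zero i (Subtype.coe_injective (by simpa using hzero))
  · intro i hzero
    have hker : ∀ j, B.coord i (colV j) = 0 := fun j => congrFun hzero j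
    have hspan : Submodule.span K (Set.range colV) = ⊤ := by
      apply Submodule.map_injective_of_injective V.injective_subtype
      rw [Submodule.map_span, Submodule.map_top, Submodule.range_subtype]
      have himg : V.subtype '' Set.range colV = Set.range Mᵀ := by
        ext x
        constructor
        · rintro ⟨_, ⟨j, rfl⟩, rfl⟩; exact ⟨j, rfl⟩
        · rintro ⟨j, rfl⟩; exact ⟨colV j, ⟨j, rfl⟩, rfl⟩
      rw [himg, hV, M.range_mulVecLin]
      rfl
    have hker2 : Submodule.span K (Set.range colV) ≤ LinearMap.ker (B.coord i) := by
      rw [Submodule.span_le]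
      rintro _ ⟨j, rfl⟩
      exact hker j
    rw [hspan] at hker2
    have h1 : B.coord i (B i) = 0 := hker2 (Submodule.mem_top)
    rw [Module.Basis.coord_apply, Module.Basis.repr_self, Finsupp.single_eq_same] at h1
    exact one_ne_zero h1
  · ext i0 j
    have hsum := B.sum_repr (colV j)
    have hsum2 : ∑ i, (B.repr (colV j)) i • ((B i : Fin m → K)) = Mᵀ j := by
      have h4 := congrArg V.subtype hsum
      rw [map_sum] at h4
      simpa using h4
    have h5 := congrFun hsum2 i0
    simp only [Finset.sum_apply, Pi.smul_apply, smul_eq_mul, Matrix.transpose_apply] at h5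
    rw [← h5]
    rw [Matrix.sum_apply]
    refine Finset.sum_congr rfl fun i _ => ?_
    rw [Matrix.vecMulVec_apply, mul_comm]


lemma tensorRank_le' {m n p s : ℕ} {T : Fin m → Fin n → Fin p → K}
    (u : Fin s → Fin m → K) (v : Fin s → Fin n → K) (w : Fin s → Fin p → K)
    (h : T = fun a b c => ∑ i, u i a * v i b * w i c) : tensorRank T ≤ s :=
  Nat.sInf_le ⟨u, v, w, h⟩

lemma drop_erase {m n p r : ℕ} {T : Fin m → Fin n → Fin p → K} (ℓ : Fin r)
    (u : Fin r → Fin m → K) (v : Fin r → Fin n → K) (w : Fin r → Fin p → K)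
    (h : T = fun a b c => ∑ i ∈ Finset.univ.erase ℓ, u i a * v i b * w i c) :
    tensorRank T ≤ r - 1 := by
  have hcard : Fintype.card {i : Fin r // i ≠ ℓ} = r - 1 := by
    simp [Fintype.card_subtype_compl]
  let e := Fintype.equivFinOfCardEq hcard
  apply tensorRank_le' (fun i => u (e.symm i).1) (fun i => v (e.symm i).1)
    (fun i => w (e.symm i).1)
  rw [h]
  funext a b c
  rw [Equiv.sum_comp e.symm (fun s : {i : Fin r // i ≠ ℓ} => u s.1 a * v s.1 b * w s.1 c)]
  exact (Finset.sum_subtype _ (fun x => by simp [Finset.mem_erase]) _)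

lemma sum_pair_erase {α M : Type*} [AddCommMonoid M] [Fintype α] [DecidableEq α]
    (f : α → M) {ℓ ℓ' : α} (h : ℓ ≠ ℓ') :
    ∑ i, f i = f ℓ + f ℓ' + ∑ i ∈ (Finset.univ.erase ℓ).erase ℓ', f i := by
  rw [← Finset.add_sum_erase _ f (Finset.mem_univ ℓ),
    ← Finset.add_sum_erase _ f (Finset.mem_erase.mpr ⟨h.symm, Finset.mem_univ ℓ'⟩),
    add_assoc]

lemma pair_eq {β : Type*} {a b c d : β} {t : Multiset β} (h : a ::ₘ b ::ₘ t = c ::ₘ d ::ₘ t) :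
    (a = c ∧ b = d) ∨ (a = d ∧ b = c) := by
  classical
  rcases Multiset.cons_eq_cons.mp h with ⟨h1, h2⟩ | ⟨hne, cs, h2, h3⟩
  · exact Or.inl ⟨h1, (Multiset.cons_inj_left t).mp h2⟩
  · right
    rcases Multiset.cons_eq_cons.mp h2 with ⟨hbc, ht⟩ | ⟨hbc, cs2, h4, h5⟩
    · rw [← ht] at h3
      exact ⟨((Multiset.cons_inj_left t).mp h3).symm, hbc⟩
    · exfalso
      rw [h4, h5] at h3
      have hcount := congrArg (Multiset.count c) h3
      simp only [Multiset.count_cons] at hcount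
      have h6 : (c = a) = False := eq_false (Ne.symm hne)
      have h7 : (c = b) = False := eq_false (fun hh => hbc hh.symm)
      rw [h6, h7] at hcount
      simp at hcount
      split_ifs at hcount <;> omega

lemma multiset_pair_cancel {ι β : Type*} [Fintype ι] [DecidableEq ι]
    (f g : ι → β) (π : Equiv.Perm ι) (hfg : ∀ j, f j = g (π j)) {ℓ ℓ' : ι} (hne : ℓ ≠ ℓ')
    (hrest : ∀ j, j ≠ ℓ → j ≠ ℓ' → f j = g j) :
    (f ℓ = g ℓ ∧ f ℓ' = g ℓ') ∨ (f ℓ = g ℓ' ∧ f ℓ' = g ℓ) := by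
  classical
  have h1 : Multiset.map f Finset.univ.val = Multiset.map g Finset.univ.val := by
    rw [Multiset.map_congr rfl (fun x _ => hfg x)]
    have h2 : Finset.univ.val.map (π : ι → ι) = Finset.univ.val := by
      have := congrArg Finset.val (Finset.map_univ_equiv π)
      simpa [Finset.map_val] using this
    conv_rhs => rw [← h2]
    rw [Multiset.map_map]
    rfl
  have hmem1 : ℓ ∈ Finset.univ.val := Finset.mem_univ ℓ
  have hnd : (Finset.univ.val : Multiset ι).Nodup := Finset.univ.nodup
  have hmem2 : ℓ' ∈ Finset.univ.val.erase ℓ :=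
    hnd.mem_erase_iff.mpr ⟨hne.symm, Finset.mem_univ ℓ'⟩
  set s := (Finset.univ.val.erase ℓ).erase ℓ' with hs
  have hu : Finset.univ.val = ℓ ::ₘ ℓ' ::ₘ s := by
    rw [hs, Multiset.cons_erase hmem2, Multiset.cons_erase hmem1]
  rw [hu] at h1
  simp only [Multiset.map_cons] at h1
  have hmaps : Multiset.map f s = Multiset.map g s := by
    apply Multiset.map_congr rfl
    intro x hx
    have hx1 : x ≠ ℓ' ∧ x ∈ Finset.univ.val.erase ℓ :=
      (hnd.erase ℓ).mem_erase_iff.mp hx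
    have hx2 : x ≠ ℓ := (hnd.mem_erase_iff.mp hx1.2).1
    exact hrest x hx2 hx1.1
  rw [hmaps] at h1
  exact pair_eq h1

theorem unique_rank_one_decomp_gives_unique_mv {m n p r : ℕ}
    (T : Fin m → Fin n → Fin p → K)
    (u : Fin r → Fin m → K) (v : Fin r → Fin n → K) (w : Fin r → Fin p → K)
    (hT : T = fun a b c => ∑ i, u i a * v i b * w i c)
    (hrank : tensorRank T = r)
    (huniq : ∀ (u' : Fin r → Fin m → K) (v' : Fin r → Fin n → K) (w' : Fin r → Fin p → K),
      T = (fun a b c => ∑ i, u' i a * v' i b * w' i c) →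
      ∃ π : Equiv.Perm (Fin r), ∀ ℓ,
        (fun a b c => u' ℓ a * v' ℓ b * w' ℓ c) =
        (fun a b c => u (π ℓ) a * v (π ℓ) b * w (π ℓ) c)) :
    (∀ ℓ ℓ' : Fin r, ℓ ≠ ℓ' → ∀ c : K, w ℓ' ≠ c • w ℓ) ∧
    IsMVDecomp T (fun ℓ => vecMulVec (u ℓ) (v ℓ)) w ∧
    (∑ ℓ, (vecMulVec (u ℓ) (v ℓ)).rank) = r ∧
    (∀ (q : ℕ) (M : Fin q → Matrix (Fin m) (Fin n) K) (γ : Fin q → Fin p → K),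
      IsMVDecomp T M γ → (∑ ℓ, (M ℓ).rank) = r →
      ∃ π : Fin q ≃ Fin r, ∀ ℓ,
        (fun a b c => M ℓ a b * γ ℓ c) =
        (fun a b c => vecMulVec (u (π ℓ)) (v (π ℓ)) a b * w (π ℓ) c)) := by
  classical
  -- Step 0: all factors are nonzero
  have hr0 : ∀ j : Fin r, u j ≠ 0 ∧ v j ≠ 0 ∧ w j ≠ 0 := by
    intro j
    by_contra hcon
    have hz : u j = 0 ∨ v j = 0 ∨ w j = 0 := by
      by_contra h2; push_neg at h2; exact hcon ⟨h2.1, h2.2.1, h2.2.2⟩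
    have hzero : ∀ a b c, u j a * v j b * w j c = 0 := by
      intro a b c
      rcases hz with h | h | h <;> simp [h]
    have hle : tensorRank T ≤ r - 1 := by
      apply drop_erase j u v w
      rw [hT]
      funext a b c
      rw [← Finset.add_sum_erase _ _ (Finset.mem_univ j), hzero, zero_add]
    have hlt : r - 1 < r := Nat.sub_lt j.pos one_pos
    rw [hrank] at hle
    omega
  -- Step 1: non-collinearity of the w's
  have hNC : ∀ ℓ ℓ' : Fin r, ℓ ≠ ℓ' → ∀ c : K, w ℓ' ≠ c • w ℓ := by
    intro ℓ ℓ' hne c hcol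
    have hwc : ∀ x, w ℓ' x = c * w ℓ x := fun x => by rw [hcol]; simp
    have hc0 : c ≠ 0 := by
      rintro rfl
      exact (hr0 ℓ').2.2 (by rw [hcol, zero_smul])
    have hdrop : ∀ (uu : Fin r → Fin m → K) (vv : Fin r → Fin n → K)
        (ww : Fin r → Fin p → K) (j : Fin r),
        (T = fun a b c => ∑ i ∈ Finset.univ.erase j, uu i a * vv i b * ww i c) → False := by
      intro uu vv ww j hrep
      have hle := drop_erase j uu vv ww hrep
      have hlt : r - 1 < r := Nat.sub_lt j.pos one_pos
      rw [hrank] at hle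
      omega
    by_cases hu2 : ∃ d : K, u ℓ' = d • u ℓ
    · obtain ⟨d, hd⟩ := hu2
      apply hdrop u (Function.update v ℓ (v ℓ + (c * d) • v ℓ')) w ℓ'
      rw [hT]
      funext a b c'
      rw [sum_pair_erase (fun i => u i a * v i b * w i c') hne,
        ← Finset.add_sum_erase _ _
          (Finset.mem_erase.mpr ⟨hne, Finset.mem_univ ℓ⟩)]
      have hSS : ∑ i ∈ (Finset.univ.erase ℓ').erase ℓ,
          u i a * Function.update v ℓ (v ℓ + (c * d) • v ℓ') i b * w i c' =
          ∑ i ∈ (Finset.univ.erase ℓ).erase ℓ', u i a * v i b * w i c' := by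
        rw [Finset.erase_right_comm]
        refine Finset.sum_congr rfl fun i hi => ?_
        have hiℓ : i ≠ ℓ := (Finset.mem_erase.mp (Finset.mem_of_mem_erase hi)).1
        rw [Function.update_of_ne hiℓ]
      rw [hSS, add_left_inj]
      have huℓ' : u ℓ' a = d * u ℓ a := by rw [hd]; simp
      rw [Function.update_self, huℓ', hwc c']
      simp only [Pi.add_apply, Pi.smul_apply, smul_eq_mul]
      ring
    by_cases hv2 : ∃ d : K, v ℓ' = d • v ℓ
    · obtain ⟨d, hd⟩ := hv2
      apply hdrop (Function.update u ℓ (u ℓ + (c * d) • u ℓ')) v w ℓ'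
      rw [hT]
      funext a b c'
      rw [sum_pair_erase (fun i => u i a * v i b * w i c') hne,
        ← Finset.add_sum_erase _ _
          (Finset.mem_erase.mpr ⟨hne, Finset.mem_univ ℓ⟩)]
      have hSS : ∑ i ∈ (Finset.univ.erase ℓ').erase ℓ,
          Function.update u ℓ (u ℓ + (c * d) • u ℓ') i a * v i b * w i c' =
          ∑ i ∈ (Finset.univ.erase ℓ).erase ℓ', u i a * v i b * w i c' := by
        rw [Finset.erase_right_comm]
        refine Finset.sum_congr rfl fun i hi => ?_
        have hiℓ : i ≠ ℓ := (Finset.mem_erase.mp (Finset.mem_of_mem_erase hi)).1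
        rw [Function.update_of_ne hiℓ]
      rw [hSS, add_left_inj]
      have hvℓ' : v ℓ' b = d * v ℓ b := by rw [hd]; simp
      rw [Function.update_self, hvℓ', hwc c']
      simp only [Pi.add_apply, Pi.smul_apply, smul_eq_mul]
      ring
    -- main case
    push_neg at hu2 hv2
    have hsum_ne : u ℓ + u ℓ' ≠ 0 := by
      intro h0
      apply hu2 (-1)
      funext x
      have := congrFun h0 x
      simp only [Pi.add_apply, Pi.zero_apply] at this
      simp only [Pi.smul_apply, smul_eq_mul]
      linear_combination this
    set u' := Function.update u ℓ (u ℓ + u ℓ') with hu'def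
    set v' := Function.update v ℓ' (c • v ℓ' - v ℓ) with hv'def
    set w' := Function.update w ℓ' (w ℓ) with hw'def
    have hT' : T = fun a b c'' => ∑ i, u' i a * v' i b * w' i c'' := by
      rw [hT]
      funext a b c''
      rw [sum_pair_erase (fun i => u i a * v i b * w i c'') hne,
        sum_pair_erase (fun i => u' i a * v' i b * w' i c'') hne]
      have hSS : ∑ i ∈ (Finset.univ.erase ℓ).erase ℓ', u' i a * v' i b * w' i c'' =
          ∑ i ∈ (Finset.univ.erase ℓ).erase ℓ', u i a * v i b * w i c'' := by
        refine Finset.sum_congr rfl fun i hi => ?_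
        have hiℓ' : i ≠ ℓ' := (Finset.mem_erase.mp hi).1
        have hiℓ : i ≠ ℓ := (Finset.mem_erase.mp (Finset.mem_of_mem_erase hi)).1
        rw [hu'def, hv'def, hw'def, Function.update_of_ne hiℓ,
          Function.update_of_ne hiℓ', Function.update_of_ne hiℓ']
      rw [hSS, add_left_inj]
      rw [hu'def, hv'def, hw'def]
      rw [Function.update_self, Function.update_self, Function.update_self,
        Function.update_of_ne hne.symm, Function.update_of_ne hne,
        Function.update_of_ne hne, hwc c'']
      simp only [Pi.add_apply, Pi.sub_apply, Pi.smul_apply, smul_eq_mul]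
      ring
    obtain ⟨π, hπ⟩ := huniq u' v' w' hT'
    have hpair := multiset_pair_cancel
      (fun j => (fun a b c'' => u' j a * v' j b * w' j c''))
      (fun j => (fun a b c'' => u j a * v j b * w j c'')) π (fun j => hπ j) hne
      (fun j hjℓ hjℓ' => by
        funext a b c''
        simp only [hu'def, hv'def, hw'def, Function.update_of_ne hjℓ,
          Function.update_of_ne hjℓ'])
    have hu'ℓ : u' ℓ = u ℓ + u ℓ' := by rw [hu'def, Function.update_self]
    have hv'ℓ : v' ℓ = v ℓ := by rw [hv'def, Function.update_of_ne hne]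
    have hw'ℓ : w' ℓ = w ℓ := by rw [hw'def, Function.update_of_ne hne]
    rcases hpair with ⟨h1, -⟩ | ⟨h1, -⟩
    · -- (u ℓ + u ℓ') ⊗ v ℓ ⊗ w ℓ = u ℓ ⊗ v ℓ ⊗ w ℓ : forces u ℓ' = 0
      obtain ⟨a0, ha0⟩ := Function.ne_iff.mp (hr0 ℓ').1
      obtain ⟨b0, hb0⟩ := Function.ne_iff.mp (hr0 ℓ).2.1
      obtain ⟨c0, hc0⟩ := Function.ne_iff.mp (hr0 ℓ).2.2
      simp only [Pi.zero_apply] at ha0 hb0 hc0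
      have := congrFun (congrFun (congrFun h1 a0) b0) c0
      simp only [hu'ℓ, hv'ℓ, hw'ℓ, Pi.add_apply] at this
      have h2 : u ℓ' a0 * (v ℓ b0 * w ℓ c0) = 0 := by linear_combination this
      rcases mul_eq_zero.mp h2 with h3 | h3
      · exact ha0 h3
      · rcases mul_eq_zero.mp h3 with h4 | h4
        · exact hb0 h4
        · exact hc0 h4
    · -- (u ℓ + u ℓ') ⊗ v ℓ ⊗ w ℓ = u ℓ' ⊗ v ℓ' ⊗ w ℓ' : forces u ℓ' ∥ u ℓ
      have hpt : ∀ a b c'', (u ℓ a + u ℓ' a) * v ℓ b * w ℓ c'' =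
          u ℓ' a * v ℓ' b * w ℓ' c'' := by
        intro a b c''
        have := congrFun (congrFun (congrFun h1 a) b) c''
        simp only [hu'ℓ, hv'ℓ, hw'ℓ, Pi.add_apply] at this
        exact this
      have hpt2 : ∀ (b : Fin n) (c'' : Fin p) (a : Fin m),
          v ℓ b * w ℓ c'' * (u ℓ + u ℓ') a = v ℓ' b * w ℓ' c'' * u ℓ' a := by
        intro b c'' a
        have := hpt a b c''
        simp only [Pi.add_apply]
        linear_combination this
      obtain ⟨d, hd0, hdu⟩ := prop3 hpt2 (hr0 ℓ).2.1 (hr0 ℓ).2.2 hsum_ne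
      by_cases hd1 : d = 1
      · apply (hr0 ℓ).1
        funext x
        have := congrFun hdu x
        simp only [Pi.smul_apply, Pi.add_apply, smul_eq_mul, hd1, one_mul] at this
        simp only [Pi.zero_apply]
        linear_combination -this
      · apply hu2 (d / (1 - d))
        funext x
        have := congrFun hdu x
        simp only [Pi.smul_apply, Pi.add_apply, smul_eq_mul] at this
        simp only [Pi.smul_apply, smul_eq_mul]
        have h1d : (1 : K) - d ≠ 0 := sub_ne_zero.mpr (Ne.symm hd1)
        field_simp
        linear_combination this
  refine ⟨hNC, ⟨?_, fun ℓ => (hr0 ℓ).2.2, hNC, ?_⟩, ?_, ?_⟩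
  · -- nonzero matrices
    intro ℓ h0
    obtain ⟨a0, ha0⟩ := Function.ne_iff.mp (hr0 ℓ).1
    obtain ⟨b0, hb0⟩ := Function.ne_iff.mp (hr0 ℓ).2.1
    simp only [Pi.zero_apply] at ha0 hb0
    have := congrFun (congrFun h0 a0) b0
    simp only [Matrix.vecMulVec_apply, Matrix.zero_apply] at this
    exact mul_ne_zero ha0 hb0 this
  · -- decomposition identity
    rw [hT]
    funext a b c
    exact Finset.sum_congr rfl fun i _ => by simp [Matrix.vecMulVec_apply]
  · -- ranks sum to r
    have : ∀ ℓ : Fin r, (vecMulVec (u ℓ) (v ℓ)).rank = 1 := fun ℓ =>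
      rank_vecMulVec_eq_one (hr0 ℓ).1 (hr0 ℓ).2.1
    simp [this]
  · -- uniqueness of matrix-vector decompositions
    intro q M γ hMV hsum
    obtain ⟨hM0, hγ0, hγNC, hTM⟩ := hMV
    choose a b ha hb hMdec using fun ℓ : Fin q => exists_rankOne_decomp (M ℓ)
    have hcard : Fintype.card (Σ ℓ : Fin q, Fin ((M ℓ).rank)) = r := by
      simp [Fintype.card_sigma, hsum]
    let e : (Σ ℓ : Fin q, Fin ((M ℓ).rank)) ≃ Fin r := Fintype.equivFinOfCardEq hcard
    have hT2 : T = fun x y z => ∑ j : Fin r,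
        a (e.symm j).1 (e.symm j).2 x * b (e.symm j).1 (e.symm j).2 y * γ (e.symm j).1 z := by
      rw [hTM]
      funext x y z
      rw [Equiv.sum_comp e.symm (fun s : (Σ ℓ : Fin q, Fin ((M ℓ).rank)) =>
        a s.1 s.2 x * b s.1 s.2 y * γ s.1 z)]
      rw [← Finset.univ_sigma_univ, Finset.sum_sigma]
      refine Finset.sum_congr rfl fun ℓ _ => ?_
      have hMxy : M ℓ x y = ∑ i : Fin ((M ℓ).rank), a ℓ i x * b ℓ i y := by
        have h7 := congrFun (congrFun (hMdec ℓ) x) y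
        simpa [Matrix.sum_apply, Matrix.vecMulVec_apply] using h7
      rw [hMxy, Finset.sum_mul]
    obtain ⟨π₀, hπ₀⟩ := huniq _ _ _ hT2
    have hkey : ∀ (ℓ : Fin q) (i : Fin ((M ℓ).rank)), ∃ d : K, d ≠ 0 ∧
        w (π₀ (e ⟨ℓ, i⟩)) = d • γ ℓ := by
      intro ℓ i
      have h1 := hπ₀ (e ⟨ℓ, i⟩)
      have h2 : ∀ x y z, a ℓ i x * b ℓ i y * γ ℓ z =
          u (π₀ (e ⟨ℓ, i⟩)) x * v (π₀ (e ⟨ℓ, i⟩)) y * w (π₀ (e ⟨ℓ, i⟩)) z := by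
        intro x y z
        have h3 := congrFun (congrFun (congrFun h1 x) y) z
        rw [show e.symm (e ⟨ℓ, i⟩) = ⟨ℓ, i⟩ from e.symm_apply_apply _] at h3
        exact h3
      exact prop3 h2 (ha ℓ i) (hb ℓ i) (hγ0 ℓ)
    have hinj : ∀ (ℓ ℓ' : Fin q) (i : Fin ((M ℓ).rank)) (i' : Fin ((M ℓ').rank)),
        π₀ (e ⟨ℓ, i⟩) = π₀ (e ⟨ℓ', i'⟩) → ℓ = ℓ' := by
      intro ℓ ℓ' i i' hEq
      by_contra hll
      obtain ⟨d, hd0, hd⟩ := hkey ℓ i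
      obtain ⟨d', hd0', hd'⟩ := hkey ℓ' i'
      rw [hEq] at hd
      apply hγNC ℓ ℓ' hll (d'⁻¹ * d)
      have h4 : d' • γ ℓ' = d • γ ℓ := hd'.symm.trans hd
      rw [mul_smul, ← h4, inv_smul_smul₀ hd0']
    have hrk1 : ∀ ℓ, (M ℓ).rank = 1 := by
      intro ℓ
      have hpos : 0 < (M ℓ).rank := rank_pos_of_ne_zero (hM0 ℓ)
      by_contra hne1
      have h2 : 2 ≤ (M ℓ).rank := by omega
      have hii : (⟨0, by omega⟩ : Fin ((M ℓ).rank)) ≠ ⟨1, by omega⟩ :=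
        Fin.ne_of_val_ne (by simp)
      have hne2 : π₀ (e ⟨ℓ, ⟨0, by omega⟩⟩) ≠ π₀ (e ⟨ℓ, ⟨1, by omega⟩⟩) := by
        intro h
        have h5 := e.injective (π₀.injective h)
        exact hii (by simpa using h5)
      obtain ⟨d, hd0, hd⟩ := hkey ℓ ⟨0, by omega⟩
      obtain ⟨d', hd0', hd'⟩ := hkey ℓ ⟨1, by omega⟩
      apply hNC _ _ hne2 (d' * d⁻¹)
      rw [hd, hd', smul_smul]
      congr 1
      field_simp
    have hqr : q = r := by
      have h6 : ∑ ℓ : Fin q, (M ℓ).rank = ∑ _ℓ : Fin q, 1 :=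
        Finset.sum_congr rfl fun ℓ _ => hrk1 ℓ
      rw [h6] at hsum
      simpa using hsum
    have hpos : ∀ ℓ : Fin q, 0 < (M ℓ).rank := fun ℓ => by rw [hrk1 ℓ]; omega
    let i0 : ∀ ℓ : Fin q, Fin ((M ℓ).rank) := fun ℓ => ⟨0, hpos ℓ⟩
    let ψ : Fin q → Fin r := fun ℓ => π₀ (e ⟨ℓ, i0 ℓ⟩)
    have hψinj : Function.Injective ψ := fun ℓ ℓ' h => hinj ℓ ℓ' _ _ h
    have hψbij : Function.Bijective ψ := by
      rw [Fintype.bijective_iff_injective_and_card]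
      exact ⟨hψinj, by simp [hqr]⟩
    refine ⟨Equiv.ofBijective ψ hψbij, ?_⟩
    intro ℓ
    have hMℓ : M ℓ = vecMulVec (a ℓ (i0 ℓ)) (b ℓ (i0 ℓ)) := by
      rw [hMdec ℓ]
      have huniv : (Finset.univ : Finset (Fin ((M ℓ).rank))) = {i0 ℓ} := by
        refine Finset.eq_singleton_iff_unique_mem.mpr ⟨Finset.mem_univ _, fun x _ => ?_⟩
        have := x.isLt
        have := hrk1 ℓ
        exact Fin.ext (by omega)
      rw [huniv, Finset.sum_singleton]
    have h1 := hπ₀ (e ⟨ℓ, i0 ℓ⟩)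
    funext x y z
    have h2 := congrFun (congrFun (congrFun h1 x) y) z
    rw [show e.symm (e ⟨ℓ, i0 ℓ⟩) = ⟨ℓ, i0 ℓ⟩ from e.symm_apply_apply _] at h2
    rw [hMℓ]
    simp only [Matrix.vecMulVec_apply, Equiv.ofBijective_apply]
    exact h2
end

section
/- Let T = Σ_{i=1}^r uᵢ ⊗ vᵢ ⊗ wᵢ where the uᵢ are linearly independent, the vᵢ are linearly independent, each wᵢ is nonzero, and K is an infinite field. Then the linear span of the 3-slices of T contains a matrix of rank r; consequently rank(T) = r. -/
open Matrix BigOperators Polynomial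

variable {K : Type*} [Field K]

/-- Dot product with a fixed vector, as a linear map. -/
noncomputable def dotL {p : ℕ} (w : Fin p → K) : (Fin p → K) →ₗ[K] K where
  toFun c := ∑ k, w k * c k
  map_add' c d := by simp [mul_add, Finset.sum_add_distrib]
  map_smul' s c := by
    simp only [Pi.smul_apply, smul_eq_mul, RingHom.id_apply, Finset.mul_sum]
    exact Finset.sum_congr rfl fun k _ => by ring

lemma exists_avoid {p r : ℕ} [Infinite K] (w : Fin r → Fin p → K) (hw : ∀ i, w i ≠ 0) :
    ∃ c : Fin p → K, ∀ i, (∑ k, w i k * c k) ≠ 0 := by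
  by_contra h
  push_neg at h
  have hcov : ⋃ i, ((LinearMap.ker (dotL (w i)) : Submodule K (Fin p → K)) : Set (Fin p → K))
      = Set.univ := by
    ext c
    simp only [Set.mem_iUnion, Set.mem_univ, iff_true, SetLike.mem_coe, LinearMap.mem_ker]
    exact h c
  obtain ⟨i, hi⟩ := Subspace.exists_eq_top_of_iUnion_eq_univ hcov
  obtain ⟨k, hk⟩ := Function.ne_iff.mp (hw i)
  apply hk
  have h0 : dotL (w i) (Pi.single k 1) = 0 := by
    rw [LinearMap.ker_eq_top.mp hi]; rfl
  simpa [dotL, Pi.single_apply, mul_ite, Finset.sum_ite_eq'] using h0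

lemma rank_sum_smul {m n r : ℕ} (u : Fin r → Fin m → K) (v : Fin r → Fin n → K)
    (lam : Fin r → K) (hlam : ∀ i, lam i ≠ 0)
    (hu : LinearIndependent K u) (hv : LinearIndependent K v) :
    (Matrix.of fun a b => ∑ i, lam i * u i a * v i b).rank = r := by
  set U : Matrix (Fin m) (Fin r) K := Matrix.of fun a i => lam i * u i a with hU
  set V : Matrix (Fin r) (Fin n) K := Matrix.of fun i b => v i b with hV
  have hZ : (Matrix.of fun a b => ∑ i, lam i * u i a * v i b) = U * V := by
    ext a b
    simp only [Matrix.mul_apply, Matrix.of_apply, hU, hV]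
  have hUinj : Function.Injective U.mulVecLin := by
    rw [← LinearMap.ker_eq_bot, eq_bot_iff]
    intro x hx
    simp only [LinearMap.mem_ker, Matrix.mulVecLin_apply] at hx
    have hx' : ∑ i, (lam i * x i) • u i = 0 := by
      funext a
      have h2 := congrFun hx a
      simp only [Matrix.mulVec, dotProduct, Matrix.of_apply, hU, Pi.zero_apply] at h2
      calc (∑ i, (lam i * x i) • u i) a = ∑ i, (lam i * x i) * u i a := by
              simp [Finset.sum_apply]
        _ = ∑ i, lam i * u i a * x i := Finset.sum_congr rfl fun i _ => by ring
        _ = 0 := h2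
    have hz := Fintype.linearIndependent_iff.mp hu _ hx'
    have : ∀ i, x i = 0 := fun i => by
      have := hz i
      rcases mul_eq_zero.mp this with h | h
      · exact absurd h (hlam i)
      · exact h
    simpa [Submodule.mem_bot] using (funext this : x = 0)
  have hVtinj : Function.Injective Vᵀ.mulVecLin := by
    rw [← LinearMap.ker_eq_bot, eq_bot_iff]
    intro y hy
    simp only [LinearMap.mem_ker, Matrix.mulVecLin_apply] at hy
    have hy' : ∑ i, y i • v i = 0 := by
      funext b
      have h2 := congrFun hy b
      simp only [Matrix.mulVec, dotProduct, Matrix.transpose_apply, Matrix.of_apply,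
        hV, Pi.zero_apply] at h2
      calc (∑ i, y i • v i) b = ∑ i, y i * v i b := by simp [Finset.sum_apply]
        _ = ∑ i, v i b * y i := Finset.sum_congr rfl fun i _ => by ring
        _ = 0 := h2
    have hz := Fintype.linearIndependent_iff.mp hv _ hy'
    simpa [Submodule.mem_bot] using (funext hz : y = 0)
  have hVrank : V.rank = r := by
    rw [← Matrix.rank_transpose, Matrix.rank, LinearMap.finrank_range_of_inj hVtinj,
      Module.finrank_fin_fun]
  have hVsurj : Function.Surjective V.mulVecLin := by
    rw [← LinearMap.range_eq_top]
    apply Submodule.eq_top_of_finrank_eq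
    rw [show Module.finrank K ↥(LinearMap.range V.mulVecLin) = V.rank from rfl, hVrank,
      Module.finrank_fin_fun]
  rw [hZ, Matrix.rank, Matrix.mulVecLin_mul,
    LinearMap.range_comp_of_range_eq_top _ (LinearMap.range_eq_top.mpr hVsurj),
    LinearMap.finrank_range_of_inj hUinj, Module.finrank_fin_fun]

lemma rank_sum_le {m n q : ℕ} (u : Fin q → Fin m → K) (v : Fin q → Fin n → K)
    (μ : Fin q → K) :
    (Matrix.of fun a b => ∑ i, μ i * (u i a * v i b)).rank ≤ q := by
  set A : Matrix (Fin m) (Fin q) K := Matrix.of fun a i => μ i * u i a with hA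
  set B : Matrix (Fin q) (Fin n) K := Matrix.of fun i b => v i b with hB
  have hZ : (Matrix.of fun a b => ∑ i, μ i * (u i a * v i b)) = A * B := by
    ext a b
    simp only [Matrix.mul_apply, Matrix.of_apply, hA, hB]
    exact Finset.sum_congr rfl fun i _ => by ring
  rw [hZ]
  calc (A * B).rank ≤ A.rank := Matrix.rank_mul_le_left A B
    _ ≤ Fintype.card (Fin q) := A.rank_le_card_width
    _ = q := Fintype.card_fin q

theorem span_slices_contains_rank_r_matrix {m n p r : ℕ} [Infinite K]
    (T : Fin m → Fin n → Fin p → K)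
    (u : Fin r → Fin m → K) (v : Fin r → Fin n → K) (w : Fin r → Fin p → K)
    (hT : T = fun a b c => ∑ i, u i a * v i b * w i c)
    (hu : LinearIndependent K u) (hv : LinearIndependent K v)
    (hw : ∀ i, w i ≠ 0) :
    (∃ Z ∈ Submodule.span K (Set.range (slice3 T)), Z.rank = r) ∧
    tensorRank T = r := by
  obtain ⟨c, hc⟩ := exists_avoid w hw
  set Z : Matrix (Fin m) (Fin n) K := ∑ k, c k • slice3 T k with hZdef
  have hZmem : Z ∈ Submodule.span K (Set.range (slice3 T)) :=
    Submodule.sum_mem _ fun k _ =>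
      Submodule.smul_mem _ _ (Submodule.subset_span ⟨k, rfl⟩)
  have hZeq : Z = Matrix.of fun a b => ∑ i, (∑ k, w i k * c k) * u i a * v i b := by
    ext a b
    have h1 : Z a b = ∑ k, c k * ∑ i, u i a * v i b * w i k := by
      simp [hZdef, Matrix.sum_apply, slice3, hT]
    rw [h1, Matrix.of_apply]
    simp only [Finset.mul_sum]
    rw [Finset.sum_comm]
    refine Finset.sum_congr rfl fun i _ => ?_
    rw [Finset.sum_mul, Finset.sum_mul]
    exact Finset.sum_congr rfl fun k _ => by ring
  have hZr : Z.rank = r := by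
    rw [hZeq]; exact rank_sum_smul u v _ hc hu hv
  refine ⟨⟨Z, hZmem, hZr⟩, ?_⟩
  have hrmem : r ∈ {r | ∃ (u : Fin r → Fin m → K) (v : Fin r → Fin n → K)
      (w : Fin r → Fin p → K), T = fun a b c => ∑ i, u i a * v i b * w i c} :=
    ⟨u, v, w, hT⟩
  refine le_antisymm (Nat.sInf_le hrmem) (le_csInf ⟨r, hrmem⟩ ?_)
  rintro r' ⟨u', v', w', hT'⟩
  set E : Fin r' → Matrix (Fin m) (Fin n) K :=
    fun i => Matrix.of fun a b => u' i a * v' i b with hE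
  have hslice : ∀ k, slice3 T k ∈ Submodule.span K (Set.range E) := by
    intro k
    have hsk : slice3 T k = ∑ i, w' i k • E i := by
      ext a b
      simp only [slice3, hT', Matrix.sum_apply, Matrix.smul_apply, hE, Matrix.of_apply,
        smul_eq_mul]
      exact Finset.sum_congr rfl fun i _ => by ring
    rw [hsk]
    exact Submodule.sum_mem _ fun i _ =>
      Submodule.smul_mem _ _ (Submodule.subset_span ⟨i, rfl⟩)
  have hZ' : Z ∈ Submodule.span K (Set.range E) :=
    Submodule.span_le.mpr (by rintro _ ⟨k, rfl⟩; exact hslice k) hZmem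
  obtain ⟨μ, hμ⟩ := (Submodule.mem_span_range_iff_exists_fun K).mp hZ'
  have hμ' : Z = Matrix.of fun a b => ∑ i, μ i * (u' i a * v' i b) := by
    rw [← hμ]
    ext a b
    simp [Matrix.sum_apply, hE]
  have hle : Z.rank ≤ r' := by rw [hμ']; exact rank_sum_le u' v' μ
  omega
end

section
/- Let T ∈ K^{m×n×p} be a tensor of tensor rank r with a decomposition T = Σ uᵢ⊗vᵢ⊗wᵢ satisfying: the uᵢ are linearly independent, the vᵢ are linearly independent, and all wᵢ are nonzero. Then in any matrix-vector decomposition T = Σ_{ℓ=1}^q M_ℓ ⊗ γ_ℓ of rank r, the subspaces Im(M₁),…,Im(M_q) are in direct sum. -/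
open Matrix BigOperators Polynomial

variable {K : Type*} [Field K]

/-- Subadditivity of finrank over a finite sup of submodules. -/
lemma finrank_finsetSup_le {V : Type*} [AddCommGroup V] [Module K V]
    [FiniteDimensional K V] {ι : Type*} [DecidableEq ι] (E : ι → Submodule K V)
    (s : Finset ι) :
    Module.finrank K ↥(s.sup E) ≤ ∑ ℓ ∈ s, Module.finrank K ↥(E ℓ) := by
  classical
  induction s using Finset.induction with
  | empty => simp
  | @insert a s hnot ih =>
    rw [Finset.sup_insert, Finset.sum_insert hnot]
    calc Module.finrank K ↑(E a ⊔ s.sup E)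
        ≤ Module.finrank K ↥(E a) + Module.finrank K ↥(s.sup E) := by
          have h := Submodule.finrank_sup_add_finrank_inf_eq (E a) (s.sup E)
          omega
      _ ≤ Module.finrank K ↥(E a) + ∑ ℓ ∈ s, Module.finrank K ↥(E ℓ) := by omega

/-- If the dimensions add up, the family is in direct sum. -/
lemma directSumFamily_of_finrank_eq {V : Type*} [AddCommGroup V] [Module K V]
    [FiniteDimensional K V] {q : ℕ} (E : Fin q → Submodule K V)
    (h : Module.finrank K ↥(Finset.univ.sup E) = ∑ ℓ, Module.finrank K ↥(E ℓ)) :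
    DirectSumFamily E := by
  classical
  intro x hx hsum ℓ0
  set B : Submodule K V := (Finset.univ.erase ℓ0).sup E with hB
  have hsup : E ℓ0 ⊔ B = Finset.univ.sup E := by
    rw [hB, ← Finset.sup_insert, Finset.insert_erase (Finset.mem_univ ℓ0)]
  have hBle : Module.finrank K ↥B ≤ ∑ ℓ ∈ Finset.univ.erase ℓ0, Module.finrank K ↥(E ℓ) :=
    finrank_finsetSup_le E _
  have hsplit : ∑ ℓ, Module.finrank K ↥(E ℓ)
      = Module.finrank K ↥(E ℓ0) + ∑ ℓ ∈ Finset.univ.erase ℓ0, Module.finrank K ↥(E ℓ) :=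
    (Finset.add_sum_erase _ _ (Finset.mem_univ ℓ0)).symm
  have hkey := Submodule.finrank_sup_add_finrank_inf_eq (E ℓ0) B
  rw [hsup, h] at hkey
  have hinf0 : Module.finrank K ↑(E ℓ0 ⊓ B) = 0 := by omega
  have hbot : E ℓ0 ⊓ B = ⊥ := Submodule.finrank_eq_zero.mp hinf0
  have hxB : x ℓ0 ∈ B := by
    have hx0 : x ℓ0 = -∑ ℓ ∈ Finset.univ.erase ℓ0, x ℓ := by
      have := Finset.add_sum_erase Finset.univ x (Finset.mem_univ ℓ0)
      rw [hsum] at this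
      linear_combination (norm := abel) this
    rw [hx0]
    exact neg_mem (Submodule.sum_mem _ fun ℓ hℓ =>
      (Finset.le_sup hℓ : E ℓ ≤ B) (hx ℓ))
  have : x ℓ0 ∈ E ℓ0 ⊓ B := ⟨hx ℓ0, hxB⟩
  rw [hbot] at this
  simpa using this

theorem images_direct_sum_in_min_mv_decomp {m n p r : ℕ} [Infinite K]
    (T : Fin m → Fin n → Fin p → K)
    (u : Fin r → Fin m → K) (v : Fin r → Fin n → K) (w : Fin r → Fin p → K)
    (hT : T = fun a b c => ∑ i, u i a * v i b * w i c)
    (hu : LinearIndependent K u) (hv : LinearIndependent K v)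
    (hw : ∀ i, w i ≠ 0)
    (hrank : tensorRank T = r)
    {q : ℕ} (M : Fin q → Matrix (Fin m) (Fin n) K) (γ : Fin q → Fin p → K)
    (hdec : IsMVDecomp T M γ) (hq : (∑ ℓ, (M ℓ).rank) = r) :
    DirectSumFamily (fun ℓ => colSpace (M ℓ)) := by
  classical
  set E : Fin q → Submodule K (Fin m → K) := fun ℓ => colSpace (M ℓ) with hE
  set S : Submodule K (Fin m → K) := Finset.univ.sup E with hS
  -- the family of vectors `w i ⊗ v i` is linearly independent
  set f : Fin r → (Fin p × Fin n → K) := fun i kb => w i kb.1 * v i kb.2 with hf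
  have hfli : LinearIndependent K f := by
    rw [Fintype.linearIndependent_iff]
    intro g hg i
    have hgk : ∀ k : Fin p, ∀ j, g j * w j k = 0 := by
      intro k
      apply Fintype.linearIndependent_iff.mp hv (fun j => g j * w j k)
      funext b
      have := congrFun hg (k, b)
      simpa [f, Finset.sum_apply, mul_assoc] using this
    obtain ⟨k, hk⟩ : ∃ k, w i k ≠ 0 := by
      by_contra hc
      push_neg at hc
      exact hw i (funext hc)
    have := hgk k i
    exact (mul_eq_zero.mp this).resolve_right hk
  -- a left inverse gives a "dual family" evaluation
  set L : (Fin r → K) →ₗ[K] (Fin p × Fin n → K) :=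
    { toFun := fun c => ∑ i, c i • f i
      map_add' := by intro a b; simp [add_smul, Finset.sum_add_distrib]
      map_smul' := by intro a b; simp [smul_smul, Finset.smul_sum] } with hL
  have hLf : ∀ i, L (Pi.single i 1) = f i := by
    intro i
    simp only [hL, LinearMap.coe_mk, AddHom.coe_mk]
    rw [Finset.sum_eq_single i (by intro b _ hb; simp [Pi.single_eq_of_ne hb])
      (by simp)]
    simp
  have hLker : LinearMap.ker L = ⊥ := by
    rw [LinearMap.ker_eq_bot']
    intro c hc
    funext i
    exact Fintype.linearIndependent_iff.mp hfli c hc i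
  obtain ⟨g, hg⟩ := L.exists_leftInverse_of_injective hLker
  -- each `u i0` lies in `S`
  have hu_mem : ∀ i0, u i0 ∈ S := by
    intro i0
    set lam : Fin p × Fin n → K := fun kb => g (Pi.single kb 1 : Fin p × Fin n → K) i0 with hlam
    have hdual : ∀ i, ∑ kb : Fin p × Fin n, lam kb * f i kb
        = if i = i0 then 1 else 0 := by
      intro i
      have h1 : f i = ∑ kb : Fin p × Fin n, f i kb • (Pi.single kb 1 : Fin p × Fin n → K) := by
        funext kb'
        rw [Finset.sum_apply]
        rw [Finset.sum_eq_single kb'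
          (by intro b _ hb; simp [Pi.single_eq_of_ne (Ne.symm hb)]) (by simp)]
        simp
      have h2 : g (f i) = Pi.single i 1 := by
        rw [← hLf i, ← LinearMap.comp_apply, hg, LinearMap.id_apply]
      calc ∑ kb : Fin p × Fin n, lam kb * f i kb
          = ∑ kb : Fin p × Fin n, (f i kb • g ((Pi.single kb 1 : Fin p × Fin n → K))) i0 := by
            apply Finset.sum_congr rfl; intro kb _; simp [hlam, mul_comm]
        _ = (∑ kb : Fin p × Fin n, f i kb • g ((Pi.single kb 1 : Fin p × Fin n → K))) i0 := by
            rw [Finset.sum_apply]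
        _ = g (f i) i0 := by
            have h3 : (∑ kb : Fin p × Fin n, f i kb • g (Pi.single kb 1 : Fin p × Fin n → K))
                = g (∑ kb : Fin p × Fin n, f i kb • (Pi.single kb 1 : Fin p × Fin n → K)) := by
              rw [map_sum]
              exact Finset.sum_congr rfl fun kb _ => (g.map_smul (f i kb) _).symm
            rw [h3, ← h1]
        _ = if i = i0 then 1 else 0 := by
            rw [h2]
            rcases eq_or_ne i i0 with hii | hii
            · subst hii; simp
            · simp [hii, Pi.single_eq_of_ne (Ne.symm hii)]
    -- express u i0 as a combination of slice columns
    have hexpr : u i0 = ∑ kb : Fin p × Fin n, lam kb • (fun a => T a kb.2 kb.1) := by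
      funext a
      rw [Finset.sum_apply]
      have : ∀ kb : Fin p × Fin n, (lam kb • fun a => T a kb.2 kb.1) a
          = ∑ i, u i a * (lam kb * f i kb) := by
        intro kb
        simp only [Pi.smul_apply, smul_eq_mul, hT, Finset.mul_sum]
        apply Finset.sum_congr rfl
        intro i _
        simp [hf]; ring
      symm
      calc ∑ kb : Fin p × Fin n, (lam kb • fun a => T a kb.2 kb.1) a
          = ∑ kb : Fin p × Fin n, ∑ i, u i a * (lam kb * f i kb) :=
            Finset.sum_congr rfl fun kb _ => this kb
        _ = ∑ i, ∑ kb : Fin p × Fin n, u i a * (lam kb * f i kb) := Finset.sum_comm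
        _ = ∑ i, u i a * (if i = i0 then 1 else 0) := by
            apply Finset.sum_congr rfl
            intro i _
            rw [← Finset.mul_sum, hdual i]
        _ = u i0 a := by simp
    rw [hexpr]
    apply Submodule.sum_mem
    intro kb _
    apply Submodule.smul_mem
    -- each slice column is in S
    have hcol : (fun a => T a kb.2 kb.1)
        = ∑ ℓ, γ ℓ kb.1 • ((M ℓ).mulVecLin (Pi.single kb.2 1)) := by
      funext a
      rw [Finset.sum_apply]
      rw [hdec.2.2.2]
      apply Finset.sum_congr rfl
      intro ℓ _
      simp only [Pi.smul_apply, smul_eq_mul, Matrix.mulVecLin_apply,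
        Matrix.mulVec, dotProduct]
      rw [Finset.sum_eq_single kb.2 (by intro b _ hb; simp [Pi.single_eq_of_ne hb])
        (by simp)]
      simp [mul_comm]
    rw [hcol]
    apply Submodule.sum_mem
    intro ℓ _
    apply Submodule.smul_mem
    exact (Finset.le_sup (Finset.mem_univ ℓ) : E ℓ ≤ S)
      ⟨Pi.single kb.2 1, rfl⟩
  -- dimension count
  have hrk : ∀ ℓ, Module.finrank K ↥(E ℓ) = (M ℓ).rank := fun ℓ => rfl
  have hle : Module.finrank K ↥S ≤ r := by
    calc Module.finrank K ↥S ≤ ∑ ℓ, Module.finrank K ↥(E ℓ) := finrank_finsetSup_le E _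
      _ = r := by rw [← hq]; exact Finset.sum_congr rfl fun ℓ _ => hrk ℓ
  have hge : r ≤ Module.finrank K ↥S := by
    have hspan : Submodule.span K (Set.range u) ≤ S := by
      rw [Submodule.span_le, Set.range_subset_iff]
      exact fun i => hu_mem i
    have : Module.finrank K ↥(Submodule.span K (Set.range u)) = r := by
      rw [finrank_span_eq_card hu, Fintype.card_fin]
    rw [← this]
    exact Submodule.finrank_mono hspan
  have heq : Module.finrank K ↥S = ∑ ℓ, Module.finrank K ↥(E ℓ) := by
    have : ∑ ℓ, Module.finrank K ↥(E ℓ) = r := by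
      rw [← hq]; exact Finset.sum_congr rfl fun ℓ _ => hrk ℓ
    omega
  exact directSumFamily_of_finrank_eq E heq
end

section
/- Suppose a tensor T ∈ K^{m×n×p} has a matrix-vector decomposition T = Σ_{ℓ=1}^q M_ℓ ⊗ w_ℓ where the subspaces Im(M_ℓ) are in direct sum and the subspaces Im(M_ℓᵀ) are also in direct sum. Then rank(T) = Σ_ℓ rank(M_ℓ), and this is the unique matrix-vector decomposition of T of minimum rank. -/
open Matrix BigOperators Polynomial

variable {K : Type*} [Field K]

set_option linter.unusedSectionVars false

section AuxA
variable {W : Type*} [AddCommGroup W] [Module K W]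

lemma mem_iSup_fin {s : ℕ} (E : Fin s → Submodule K W) {v : W} (hv : v ∈ ⨆ j, E j) :
    ∃ x : Fin s → W, (∀ j, x j ∈ E j) ∧ ∑ j, x j = v := by
  rw [Submodule.mem_iSup_iff_exists_finsupp] at hv
  obtain ⟨f, hf, hsum⟩ := hv
  refine ⟨fun j => f j, hf, ?_⟩
  rw [← hsum, Finsupp.sum_fintype]
  intro i; rfl

lemma biSup_eq_if {s : ℕ} (E : Fin s → Submodule K W) (j0 : Fin s) :
    (⨆ j, ⨆ (_ : j ≠ j0), E j) =
      ⨆ j, (if j = j0 then (⊥ : Submodule K W) else E j) := by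
  apply le_antisymm
  · refine iSup_le fun j => iSup_le fun hj => ?_
    refine le_trans ?_ (le_iSup _ j)
    rw [if_neg hj]
  · refine iSup_le fun j => ?_
    by_cases hj : j = j0
    · rw [if_pos hj]; exact bot_le
    · rw [if_neg hj]
      exact le_iSup₂ (f := fun j (_ : j ≠ j0) => E j) j hj

lemma dsf_zero_of_mem_others {s : ℕ} {E : Fin s → Submodule K W}
    (h : DirectSumFamily E) (j0 : Fin s) {v : W} (hv : v ∈ E j0)
    (hv' : v ∈ ⨆ j, ⨆ (_ : j ≠ j0), E j) : v = 0 := by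
  rw [biSup_eq_if] at hv'
  obtain ⟨x, hx, hsum⟩ := mem_iSup_fin _ hv'
  have hxj0 : x j0 = 0 := by
    have := hx j0; rwa [if_pos rfl, Submodule.mem_bot] at this
  set y : Fin s → W := fun j => if j = j0 then -v else x j with hy
  have hmem : ∀ j, y j ∈ E j := by
    intro j
    by_cases hj : j = j0
    · subst hj; simpa [hy] using neg_mem hv
    · have := hx j; rw [if_neg hj] at this; simpa [hy, hj] using this
  have hsum0 : ∑ j, y j = 0 := by
    have h1 : ∑ j, y j = -v + ∑ j ∈ Finset.univ.erase j0, x j := by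
      rw [← Finset.add_sum_erase _ y (Finset.mem_univ j0)]
      congr 1
      · simp [hy]
      · exact Finset.sum_congr rfl fun j hj => by
          simp [hy, Finset.ne_of_mem_erase hj]
    have h2 : ∑ j ∈ Finset.univ.erase j0, x j = v := by
      rw [← hsum, ← Finset.add_sum_erase _ x (Finset.mem_univ j0), hxj0, zero_add]
    rw [h1, h2, neg_add_cancel]
  have := h y hmem hsum0 j0
  rw [hy] at this; simpa using this

lemma iSup_eq_self_sup_others {s : ℕ} (E : Fin s → Submodule K W) (j0 : Fin s) :
    (⨆ j, E j) = E j0 ⊔ ⨆ j, ⨆ (_ : j ≠ j0), E j := by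
  apply le_antisymm
  · refine iSup_le fun j => ?_
    by_cases hj : j = j0
    · subst hj; exact le_sup_left
    · exact le_trans (le_iSup₂ (f := fun j (_ : j ≠ j0) => E j) j hj) le_sup_right
  · refine sup_le (le_iSup _ j0) (iSup_le fun j => iSup_le fun _ => le_iSup _ j)

end AuxA

section AuxB
variable {W : Type*} [AddCommGroup W] [Module K W] [FiniteDimensional K W]
open Module

lemma biSup_univ {s : ℕ} (E : Fin s → Submodule K W) :
    (⨆ j ∈ (Finset.univ : Finset (Fin s)), E j) = ⨆ j, E j := by
  apply le_antisymm
  · exact iSup₂_le fun j _ => le_iSup E j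
  · exact iSup_le fun j => le_iSup₂ (f := fun j (_ : j ∈ Finset.univ) => E j) j (Finset.mem_univ j)

lemma biSup_insert' {s : ℕ} (E : Fin s → Submodule K W) (a : Fin s) (t : Finset (Fin s)) :
    (⨆ j ∈ insert a t, E j) = E a ⊔ ⨆ j ∈ t, E j := by
  apply le_antisymm
  · refine iSup₂_le fun j hj => ?_
    rcases Finset.mem_insert.mp hj with rfl | hj
    · exact le_sup_left
    · exact le_trans (le_iSup₂ (f := fun j (_ : j ∈ t) => E j) j hj) le_sup_right
  · refine sup_le (le_iSup₂ (f := fun j (_ : j ∈ insert a t) => E j) a (Finset.mem_insert_self a t))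
      (iSup₂_le fun j hj => le_iSup₂ (f := fun j (_ : j ∈ insert a t) => E j) j (Finset.mem_insert_of_mem hj))

lemma fr_biSup_le {s : ℕ} (E : Fin s → Submodule K W) (t : Finset (Fin s)) :
    finrank K ↥(⨆ j ∈ t, E j) ≤ ∑ j ∈ t, finrank K ↥(E j) := by
  classical
  induction t using Finset.induction_on with
  | empty => simp
  | @insert a t ha ih =>
      rw [Finset.sum_insert ha]
      rw [biSup_insert']
      have h1 := Submodule.finrank_sup_add_finrank_inf_eq (E a) (⨆ j ∈ t, E j)
      omega

lemma fr_iSup_le {s : ℕ} (E : Fin s → Submodule K W) :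
    finrank K ↥(⨆ j, E j) ≤ ∑ j, finrank K ↥(E j) := by
  rw [← biSup_univ E]
  exact fr_biSup_le E Finset.univ

lemma dsf_fr_iSup {s : ℕ} {E : Fin s → Submodule K W} (h : DirectSumFamily E) :
    finrank K ↥(⨆ j, E j) = ∑ j, finrank K ↥(E j) := by
  classical
  have key : ∀ t : Finset (Fin s), finrank K ↥(⨆ j ∈ t, E j) = ∑ j ∈ t, finrank K ↥(E j) := by
    intro t
    induction t using Finset.induction_on with
    | empty => simp
    | @insert a t ha ih =>
        rw [Finset.sum_insert ha, ← ih]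
        rw [biSup_insert']
        have hinf : E a ⊓ (⨆ j ∈ t, E j) = ⊥ := by
          rw [eq_bot_iff]
          rintro x ⟨hx1, hx2⟩
          have hle : (⨆ j ∈ t, E j) ≤ ⨆ j, ⨆ (_ : j ≠ a), E j := by
            refine iSup₂_le fun j hj => ?_
            exact le_iSup₂ (f := fun j (_ : j ≠ a) => E j) j (by rintro rfl; exact ha hj)
          exact (Submodule.mem_bot K).mpr (dsf_zero_of_mem_others h a hx1 (hle hx2))
        have h1 := Submodule.finrank_sup_add_finrank_inf_eq (E a) (⨆ j ∈ t, E j)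
        rw [hinf] at h1
        simp at h1
        omega
  rw [← biSup_univ E]
  exact key Finset.univ

lemma dsf_of_fr {s : ℕ} {E : Fin s → Submodule K W}
    (h : ∑ j, finrank K ↥(E j) = finrank K ↥(⨆ j, E j)) : DirectSumFamily E := by
  classical
  have hdisj : ∀ j0, E j0 ⊓ (⨆ j, ⨆ (_ : j ≠ j0), E j) = ⊥ := by
    intro j0
    have h1 := Submodule.finrank_sup_add_finrank_inf_eq (E j0) (⨆ j, ⨆ (_ : j ≠ j0), E j)
    rw [← iSup_eq_self_sup_others] at h1
    have h2 : finrank K ↥(⨆ j, ⨆ (_ : j ≠ j0), E j)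
        ≤ ∑ j ∈ Finset.univ.erase j0, finrank K ↥(E j) := by
      have hEq : (⨆ j, ⨆ (_ : j ≠ j0), E j) = ⨆ j ∈ Finset.univ.erase j0, E j := by
        apply le_antisymm
        · refine iSup₂_le fun j hj => ?_
          exact le_iSup₂ (f := fun j (_ : j ∈ Finset.univ.erase j0) => E j) j (by simp [hj])
        · refine iSup₂_le fun j hj => ?_
          exact le_iSup₂ (f := fun j (_ : j ≠ j0) => E j) j (Finset.ne_of_mem_erase hj)
      rw [hEq]
      exact fr_biSup_le E _
    have h3 : finrank K ↥(E j0) + ∑ j ∈ Finset.univ.erase j0, finrank K ↥(E j)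
        = ∑ j, finrank K ↥(E j) := by
      exact Finset.add_sum_erase Finset.univ (fun j => finrank K ↥(E j)) (Finset.mem_univ j0)
    have h4 : finrank K ↥(E j0 ⊓ ⨆ j, ⨆ (_ : j ≠ j0), E j) = 0 := by omega
    rw [← Submodule.finrank_eq_zero (R := K)]
    exact h4
  intro x hx hsum j0
  have hmem : x j0 ∈ E j0 ⊓ (⨆ j, ⨆ (_ : j ≠ j0), E j) := by
    refine ⟨hx j0, ?_⟩
    have h5 := Finset.add_sum_erase Finset.univ x (Finset.mem_univ j0)
    rw [hsum] at h5
    have h6 : x j0 = -∑ j ∈ Finset.univ.erase j0, x j := eq_neg_of_add_eq_zero_left h5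
    rw [h6]
    refine neg_mem (Submodule.sum_mem _ fun j hj => ?_)
    exact (le_iSup₂ (f := fun j (_ : j ≠ j0) => E j) j (Finset.ne_of_mem_erase hj)) (hx j)
  rw [hdisj j0] at hmem
  exact (Submodule.mem_bot K).mp hmem

end AuxB

section AuxC
variable {s m n : ℕ}

lemma matrix_eq_of_mulVecLin {X Y : Matrix (Fin m) (Fin n) K}
    (h : X.mulVecLin = Y.mulVecLin) : X = Y := by
  have h2 : Matrix.toLin' X = Matrix.toLin' Y := by
    rw [Matrix.toLin'_apply', Matrix.toLin'_apply', h]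
  exact Matrix.toLin'.injective h2

lemma exists_proj (N : Fin s → Matrix (Fin m) (Fin n) K)
    (h : DirectSumFamily fun j => colSpace (N j)) :
    ∃ P : Fin s → Matrix (Fin m) (Fin m) K,
      (∀ j j', P j * N j' = if j' = j then N j else 0) ∧
      (∀ v, v ∈ (⨆ j, colSpace (N j)) → ∑ j, (P j).mulVec v = v) := by
  classical
  have key : ∀ j : Fin s, ∃ pr : (Fin m → K) →ₗ[K] (Fin m → K),
      (∀ v ∈ colSpace (N j), pr v = v) ∧
      (∀ j', j' ≠ j → ∀ v ∈ colSpace (N j'), pr v = 0) := by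
    intro j
    set Zj := ⨆ j', ⨆ (_ : j' ≠ j), colSpace (N j') with hZ
    obtain ⟨C, hC⟩ := Submodule.exists_isCompl (colSpace (N j) ⊔ Zj)
    have hcompl : IsCompl (colSpace (N j)) (Zj ⊔ C) := by
      constructor
      · rw [Submodule.disjoint_def]
        intro x hx hx'
        obtain ⟨z, hz, c, hc', rfl⟩ := Submodule.mem_sup.mp hx'
        have hcz : c ∈ (colSpace (N j) ⊔ Zj) ⊓ C := by
          refine ⟨?_, hc'⟩
          have : c = (z + c) - z := by ring_nf
          rw [this]
          exact Submodule.sub_mem _ (Submodule.mem_sup_left hx) (Submodule.mem_sup_right hz)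
        rw [hC.inf_eq_bot] at hcz
        rw [(Submodule.mem_bot K).mp hcz, add_zero] at hx ⊢
        exact dsf_zero_of_mem_others h j hx hz
      · rw [codisjoint_iff, ← sup_assoc]
        exact codisjoint_iff.mp hC.codisjoint
    refine ⟨(colSpace (N j)).subtype.comp (Submodule.projectionOnto _ _ hcompl), ?_, ?_⟩
    · intro v hv
      have := Submodule.projectionOnto_apply_left hcompl ⟨v, hv⟩
      exact congrArg Subtype.val this
    · intro j' hj' v hv
      have hvZ : v ∈ Zj ⊔ C :=
        Submodule.mem_sup_left ((le_iSup₂ (f := fun j' (_ : j' ≠ j) => colSpace (N j')) j' hj') hv)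
      have := Submodule.projectionOnto_apply_of_mem_right hcompl hvZ
      rw [LinearMap.comp_apply, this, map_zero]
  choose pr hpr1 hpr2 using key
  refine ⟨fun j => LinearMap.toMatrix' (pr j), ?_, ?_⟩
  · intro j j'
    apply matrix_eq_of_mulVecLin
    rw [Matrix.mulVecLin_mul]
    have hP : (LinearMap.toMatrix' (pr j)).mulVecLin = pr j := by
      rw [← Matrix.toLin'_apply', Matrix.toLin'_toMatrix']
    rw [hP]
    refine LinearMap.ext fun x => ?_
    simp only [LinearMap.comp_apply]
    by_cases hj : j' = j
    · rw [hj]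
      rw [hpr1 j (((N j).mulVecLin) x) ⟨x, rfl⟩]
      simp
    · rw [hpr2 j j' hj (((N j').mulVecLin) x) ⟨x, rfl⟩]
      simp [hj]
  · intro v hv
    obtain ⟨x, hx, rfl⟩ := mem_iSup_fin _ hv
    have hP : ∀ j u, (LinearMap.toMatrix' (pr j)).mulVec u = pr j u := by
      intro j u
      rw [← Matrix.mulVecLin_apply, ← Matrix.toLin'_apply', Matrix.toLin'_toMatrix']
    calc ∑ j, (LinearMap.toMatrix' (pr j)).mulVec (∑ j', x j')
        = ∑ j, ∑ j', pr j (x j') := by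
          refine Finset.sum_congr rfl fun j _ => ?_
          rw [hP]; exact map_sum _ _ _
      _ = ∑ j, x j := by
          refine Finset.sum_congr rfl fun j _ => ?_
          rw [Finset.sum_eq_single j]
          · exact hpr1 j (x j) (hx j)
          · intro j' _ hj'; exact hpr2 j j' hj' (x j') (hx j')
          · intro hj; exact absurd (Finset.mem_univ j) hj
end AuxC

section AuxD
variable {s m n : ℕ}

lemma dot_all_zero {v : Fin n → K} (h : ∀ x : Fin n → K, v ⬝ᵥ x = 0) : v = 0 := by
  funext i
  have := h (Pi.single i 1)
  rwa [dotProduct_single, mul_one] at this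

lemma joint_surj (M : Fin s → Matrix (Fin m) (Fin n) K)
    (hrow : DirectSumFamily fun ℓ => colSpace (M ℓ)ᵀ)
    (y : Fin s → Fin m → K) (hy : ∀ ℓ, y ℓ ∈ colSpace (M ℓ)) :
    ∃ x : Fin n → K, ∀ ℓ, (M ℓ) *ᵥ x = y ℓ := by
  classical
  set Φ : (Fin n → K) →ₗ[K] (Fin s → Fin m → K) :=
    LinearMap.pi (fun ℓ => (M ℓ).mulVecLin) with hΦ
  by_cases hy' : y ∈ LinearMap.range Φ
  · obtain ⟨x, hx⟩ := hy'
    exact ⟨x, fun ℓ => by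
      have := congrFun hx ℓ
      simpa [hΦ, LinearMap.pi_apply] using this⟩
  exfalso
  obtain ⟨f, hf0, hfmap⟩ :=
    Submodule.exists_dual_map_eq_bot_of_notMem hy' inferInstance
  set e : Fin s → Fin m → (Fin s → Fin m → K) :=
    fun ℓ i => Pi.single ℓ (Pi.single i 1) with he
  set z : Fin s → Fin m → K := fun ℓ i => f (e ℓ i) with hz
  have hrep : ∀ u : Fin s → Fin m → K, f u = ∑ ℓ, u ℓ ⬝ᵥ z ℓ := by
    intro u
    have hu : u = ∑ ℓ, ∑ i, u ℓ i • e ℓ i := by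
      funext ℓ' i'
      simp only [Finset.sum_apply, Pi.smul_apply, he, Pi.single_apply, smul_eq_mul]
      rw [Finset.sum_eq_single ℓ']
      · rw [Finset.sum_eq_single i']
        · simp
        · intro b _ hb; simp [Pi.single_apply, hb]
        · simp
      · intro ℓ _ hℓ; simp [Ne.symm hℓ]
      · simp
    calc f u = f (∑ ℓ, ∑ i, u ℓ i • e ℓ i) := by rw [← hu]
      _ = ∑ ℓ, ∑ i, u ℓ i * z ℓ i := by
          rw [map_sum]
          refine Finset.sum_congr rfl fun ℓ _ => ?_
          rw [map_sum]
          refine Finset.sum_congr rfl fun i _ => ?_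
          rw [_root_.map_smul, smul_eq_mul]
      _ = ∑ ℓ, u ℓ ⬝ᵥ z ℓ := by
          refine Finset.sum_congr rfl fun ℓ _ => ?_
          simp [dotProduct]
  have hker : ∀ x : Fin n → K, f (Φ x) = 0 := by
    intro x
    have : f (Φ x) ∈ Submodule.map f (LinearMap.range Φ) :=
      Submodule.mem_map_of_mem (LinearMap.mem_range_self Φ x)
    rw [hfmap] at this
    exact (Submodule.mem_bot K).mp this
  have hzero : (∑ ℓ, (M ℓ)ᵀ *ᵥ z ℓ) = 0 := by
    apply dot_all_zero
    intro x
    have h1 := hker x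
    rw [hrep] at h1
    have h2 : ∀ ℓ, (Φ x) ℓ ⬝ᵥ z ℓ = ((M ℓ)ᵀ *ᵥ z ℓ) ⬝ᵥ x := by
      intro ℓ
      have hφx : (Φ x) ℓ = (M ℓ) *ᵥ x := by simp [hΦ, LinearMap.pi_apply]
      rw [hφx, Matrix.mulVec_transpose, ← Matrix.dotProduct_mulVec, dotProduct_comm]
    rw [Finset.sum_congr rfl (fun ℓ _ => h2 ℓ)] at h1
    have hsd : (∑ ℓ, (M ℓ)ᵀ *ᵥ z ℓ) ⬝ᵥ x = ∑ ℓ, ((M ℓ)ᵀ *ᵥ z ℓ) ⬝ᵥ x := by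
      simp only [dotProduct, Finset.sum_apply, Finset.sum_mul]
      exact Finset.sum_comm
    rw [hsd]
    exact h1
  have heach : ∀ ℓ, (M ℓ)ᵀ *ᵥ z ℓ = 0 :=
    hrow (fun ℓ => (M ℓ)ᵀ *ᵥ z ℓ) (fun ℓ => ⟨z ℓ, rfl⟩) hzero
  apply hf0
  rw [hrep]
  refine Finset.sum_eq_zero fun ℓ _ => ?_
  obtain ⟨x, hx⟩ := hy ℓ
  have hyx : y ℓ = (M ℓ) *ᵥ x := hx.symm
  rw [hyx, dotProduct_comm, Matrix.dotProduct_mulVec, ← Matrix.mulVec_transpose,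
    heach ℓ, zero_dotProduct]
end AuxD

section AuxE
variable {m n : ℕ}
open Module

lemma rank_factorization (M : Matrix (Fin m) (Fin n) K) :
    ∃ (u : Fin M.rank → Fin m → K) (v : Fin M.rank → Fin n → K),
      ∀ a b, M a b = ∑ i, u i a * v i b := by
  classical
  have hfr : finrank K ↥(colSpace M) = M.rank := rfl
  let B : Basis (Fin M.rank) K ↥(colSpace M) := Module.finBasisOfFinrankEq K _ hfr
  let col : Fin n → ↥(colSpace M) := fun b =>
    ⟨M *ᵥ Pi.single b 1, ⟨Pi.single b 1, rfl⟩⟩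
  refine ⟨fun i a => (B i : Fin m → K) a, fun i b => B.repr (col b) i, fun a b => ?_⟩
  have h1 : ((col b : ↥(colSpace M)) : Fin m → K) a = M a b := by
    simp [col, Matrix.mulVec_single]
  rw [← h1]
  have h2 := B.sum_repr (col b)
  calc ((col b : ↥(colSpace M)) : Fin m → K) a
      = ((∑ i, B.repr (col b) i • B i : ↥(colSpace M)) : Fin m → K) a := by rw [h2]
    _ = ∑ i, B.repr (col b) i * (B i : Fin m → K) a := by
        rw [Submodule.coe_sum]
        simp [Finset.sum_apply]
    _ = ∑ i, (B i : Fin m → K) a * B.repr (col b) i :=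
        Finset.sum_congr rfl fun i _ => mul_comm _ _
end AuxE

section Main
variable {m n p q : ℕ}
open Module

-- generic helper about a single MV decomposition with row-direct-sum:
-- every colSpace (M ℓ) is inside any submodule containing all columns of T
lemma col_le_of_cols {T : Fin m → Fin n → Fin p → K}
    {M : Fin q → Matrix (Fin m) (Fin n) K} {w : Fin q → Fin p → K}
    (hT : T = fun a b c => ∑ ℓ, M ℓ a b * w ℓ c)
    (hw0 : ∀ ℓ, w ℓ ≠ 0)
    (hrow : DirectSumFamily fun ℓ => colSpace (M ℓ)ᵀ)
    (G : Submodule K (Fin m → K)) (hG : ∀ b c, (fun a => T a b c) ∈ G)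
    (ℓ : Fin q) : colSpace (M ℓ) ≤ G := by
  classical
  intro y hy
  obtain ⟨x, hx⟩ := joint_surj M hrow (fun ℓ' => if ℓ' = ℓ then y else 0)
    (fun ℓ' => by
      by_cases h : ℓ' = ℓ
      · subst h; simpa using hy
      · simp [h])
  obtain ⟨k0, hk0⟩ : ∃ k, w ℓ k ≠ 0 := by
    by_contra hcon; push_neg at hcon; exact hw0 ℓ (funext hcon)
  have hcolG : (fun a => ∑ b, x b * T a b k0) ∈ G := by
    have heq : (fun a => ∑ b, x b * T a b k0)
        = ∑ b, x b • (fun a => T a b k0) := by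
      funext a; simp [Finset.sum_apply]
    rw [heq]
    exact Submodule.sum_mem _ fun b _ => Submodule.smul_mem _ _ (hG b k0)
  have hval : (fun a => ∑ b, x b * T a b k0) = w ℓ k0 • y := by
    funext a
    simp only [hT]
    calc ∑ b, x b * ∑ ℓ', M ℓ' a b * w ℓ' k0
        = ∑ b, ∑ ℓ', x b * (M ℓ' a b * w ℓ' k0) := by
          refine Finset.sum_congr rfl fun b _ => Finset.mul_sum _ _ _
      _ = ∑ ℓ', ∑ b, x b * (M ℓ' a b * w ℓ' k0) := Finset.sum_comm
      _ = ∑ ℓ', w ℓ' k0 * ((M ℓ') *ᵥ x) a := by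
          refine Finset.sum_congr rfl fun ℓ' _ => ?_
          simp only [Matrix.mulVec, dotProduct, Finset.mul_sum]
          refine Finset.sum_congr rfl fun b _ => by ring
      _ = w ℓ k0 * y a := by
          rw [Finset.sum_eq_single ℓ]
          · rw [hx ℓ]; simp
          · intro ℓ' _ hℓ'; rw [hx ℓ']; simp [hℓ']
          · simp
      _ = (w ℓ k0 • y) a := rfl
  have hy' : y = (w ℓ k0)⁻¹ • ((fun a => ∑ b, x b * T a b k0)) := by
    rw [hval, smul_smul, inv_mul_cancel₀ hk0, one_smul]
  rw [hy']
  exact Submodule.smul_mem _ _ hcolG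

end Main

theorem uniqueness_theorem_form_two {m n p q : ℕ} [Infinite K]
    (T : Fin m → Fin n → Fin p → K)
    (M : Fin q → Matrix (Fin m) (Fin n) K) (w : Fin q → Fin p → K)
    (hdec : IsMVDecomp T M w)
    (hcol : DirectSumFamily (fun ℓ => colSpace (M ℓ)))
    (hrow : DirectSumFamily (fun ℓ => colSpace (M ℓ)ᵀ)) :
    tensorRank T = (∑ ℓ, (M ℓ).rank) ∧
    (∀ (q' : ℕ) (M' : Fin q' → Matrix (Fin m) (Fin n) K) (w' : Fin q' → Fin p → K),
      IsMVDecomp T M' w' → (∑ ℓ, (M' ℓ).rank) = (∑ ℓ, (M ℓ).rank) →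
      ∃ π : Fin q' ≃ Fin q, ∀ ℓ,
        (fun a b c => M' ℓ a b * w' ℓ c) =
        (fun a b c => M (π ℓ) a b * w (π ℓ) c)) := by
  classical
  obtain ⟨hM0, hw0, hwnc, hT⟩ := hdec
  set R := ∑ ℓ, (M ℓ).rank with hR
  have hfrcol : ∀ (m' n' : ℕ) (A : Matrix (Fin m') (Fin n') K),
      Module.finrank K ↥(colSpace A) = A.rank := fun _ _ _ => rfl
  have hfrV : Module.finrank K ↥(⨆ ℓ, colSpace (M ℓ)) = R := by
    rw [dsf_fr_iSup hcol]; rfl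
  -- upper bound decomposition
  have hmemUB : R ∈ {r | ∃ (u : Fin r → Fin m → K) (v : Fin r → Fin n → K)
      (w : Fin r → Fin p → K), T = fun a b c => ∑ i, u i a * v i b * w i c} := by
    choose uu vv huv using fun ℓ => rank_factorization (M ℓ)
    have hcard : Fintype.card (Σ ℓ : Fin q, Fin ((M ℓ).rank)) = R := by
      simp [Fintype.card_sigma, hR]
    let σe : (Σ ℓ : Fin q, Fin ((M ℓ).rank)) ≃ Fin R := Fintype.equivFinOfCardEq hcard
    refine ⟨fun i => uu (σe.symm i).1 (σe.symm i).2,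
      fun i => vv (σe.symm i).1 (σe.symm i).2,
      fun i => w (σe.symm i).1, ?_⟩
    rw [hT]
    funext a b c
    have h1 : ∑ i : Fin R, uu (σe.symm i).1 (σe.symm i).2 a * vv (σe.symm i).1 (σe.symm i).2 b
          * w (σe.symm i).1 c
        = ∑ s : (Σ ℓ : Fin q, Fin ((M ℓ).rank)), uu s.1 s.2 a * vv s.1 s.2 b * w s.1 c :=
      Equiv.sum_comp σe.symm (fun s => uu s.1 s.2 a * vv s.1 s.2 b * w s.1 c)
    rw [h1, ← Finset.univ_sigma_univ, Finset.sum_sigma]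
    refine Finset.sum_congr rfl fun ℓ _ => ?_
    rw [huv ℓ a b, Finset.sum_mul]
  have hlb : ∀ r, (∃ (u : Fin r → Fin m → K) (v : Fin r → Fin n → K)
      (w : Fin r → Fin p → K), T = fun a b c => ∑ i, u i a * v i b * w i c) → R ≤ r := by
    rintro r ⟨u, v, w'', hTr⟩
    have hle : (⨆ ℓ, colSpace (M ℓ)) ≤ Submodule.span K (Set.range u) := by
      refine iSup_le fun ℓ => col_le_of_cols hT hw0 hrow _ ?_ ℓ
      intro b c
      have heq : (fun a => T a b c) = ∑ i, (v i b * w'' i c) • u i := by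
        funext a
        rw [hTr]
        simp only [Finset.sum_apply, Pi.smul_apply, smul_eq_mul]
        exact Finset.sum_congr rfl fun i _ => by ring
      rw [heq]
      exact Submodule.sum_mem _ fun i _ =>
        Submodule.smul_mem _ _ (Submodule.subset_span (Set.mem_range_self i))
    have h1 : R ≤ Module.finrank K ↥(Submodule.span K (Set.range u)) := by
      rw [← hfrV]
      exact Submodule.finrank_mono hle
    have h2 : Module.finrank K ↥(Submodule.span K (Set.range u)) ≤ r := by
      have h3 := finrank_span_le_card (R := K) (Set.range u)
      have h4 : (Set.range u).toFinset.card ≤ r := by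
        rw [Set.toFinset_range]
        exact le_trans Finset.card_image_le (by simp)
      omega
    omega
  have hpart1 : tensorRank T = R := by
    refine le_antisymm (Nat.sInf_le hmemUB) ?_
    exact hlb _ (Nat.sInf_mem ⟨R, hmemUB⟩)
  refine ⟨hpart1, ?_⟩
  intro q' M' w' hdec' hrank
  obtain ⟨hM0', hw0', hwnc', hT'⟩ := hdec'
  have hwk' : ∀ j, ∃ k, w' j k ≠ 0 := fun j => by
    by_contra hcon; push_neg at hcon; exact hw0' j (funext hcon)
  set V' : Submodule K (Fin m → K) := ⨆ j, colSpace (M' j) with hV'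
  -- columns of T lie in V'
  have hcols' : ∀ b c, (fun a => T a b c) ∈ V' := by
    intro b c
    have heq : (fun a => T a b c) = ∑ j, w' j c • ((M' j) *ᵥ Pi.single b 1) := by
      funext a
      rw [hT']
      simp only [Finset.sum_apply, Pi.smul_apply, smul_eq_mul]
      refine Finset.sum_congr rfl fun j _ => ?_
      rw [Matrix.mulVec_single_one, Matrix.col_apply]
      ring
    rw [heq]
    exact Submodule.sum_mem _ fun j _ => Submodule.smul_mem _ _
      ((le_iSup (fun j => colSpace (M' j)) j) ⟨Pi.single b 1, rfl⟩)
  have hVleV' : ∀ ℓ, colSpace (M ℓ) ≤ V' := fun ℓ =>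
    col_le_of_cols hT hw0 hrow V' hcols' ℓ
  have h2sum : ∑ j, Module.finrank K ↥(colSpace (M' j)) = R := by
    rw [← hrank]; rfl
  -- direct sum of primed column spaces
  have hfrV'le : Module.finrank K ↥V' ≤ R := by
    have h1 := fr_iSup_le (fun j => colSpace (M' j))
    rw [← hV'] at h1
    omega
  have hfrV'ge : R ≤ Module.finrank K ↥V' := by
    rw [← hfrV]
    exact Submodule.finrank_mono (iSup_le hVleV')
  have hfrV'eq : Module.finrank K ↥V' = R := le_antisymm hfrV'le hfrV'ge
  have hdsf' : DirectSumFamily (fun j => colSpace (M' j)) := by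
    apply dsf_of_fr
    rw [← hV', hfrV'eq, h2sum]
  obtain ⟨P, hP1, hP2⟩ := exists_proj M' hdsf'
  obtain ⟨Pt, hPt1, -⟩ := exists_proj (fun ℓ => (M ℓ)ᵀ) hrow
  set Q : Fin q → Matrix (Fin n) (Fin n) K := fun ℓ => (Pt ℓ)ᵀ with hQdef
  have hQ : ∀ ℓ ℓ', M ℓ' * Q ℓ = if ℓ' = ℓ then M ℓ else 0 := by
    intro ℓ ℓ'
    have h1 := hPt1 ℓ ℓ'
    have h2 := congrArg Matrix.transpose h1
    rw [Matrix.transpose_mul, Matrix.transpose_transpose] at h2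
    rw [hQdef, h2]
    by_cases h : ℓ' = ℓ <;> simp [h]
  -- slices
  set S : Fin p → Matrix (Fin m) (Fin n) K := fun k => Matrix.of fun a b => T a b k with hSdef
  have hS : ∀ k, S k = ∑ ℓ, w ℓ k • M ℓ := by
    intro k; ext a b
    simp only [hSdef, Matrix.of_apply, hT, Matrix.sum_apply, Matrix.smul_apply, smul_eq_mul]
    exact Finset.sum_congr rfl fun ℓ _ => mul_comm _ _
  have hS' : ∀ k, S k = ∑ j, w' j k • M' j := by
    intro k; ext a b
    simp only [hSdef, Matrix.of_apply, hT', Matrix.sum_apply, Matrix.smul_apply, smul_eq_mul]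
    exact Finset.sum_congr rfl fun j _ => mul_comm _ _
  have hPS : ∀ j k, P j * S k = w' j k • M' j := by
    intro j k
    rw [hS' k, Matrix.mul_sum]
    rw [Finset.sum_eq_single j]
    · rw [Matrix.mul_smul, hP1 j j, if_pos rfl]
    · intro j' _ hj'
      rw [Matrix.mul_smul, hP1 j j', if_neg hj', smul_zero]
    · simp
  have hSQ : ∀ ℓ k, S k * Q ℓ = w ℓ k • M ℓ := by
    intro ℓ k
    rw [hS k, Matrix.sum_mul]
    rw [Finset.sum_eq_single ℓ]
    · rw [Matrix.smul_mul, hQ ℓ ℓ, if_pos rfl]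
    · intro ℓ' _ hℓ'
      rw [Matrix.smul_mul, hQ ℓ ℓ', if_neg hℓ', smul_zero]
    · simp
  have hkey : ∀ j ℓ k, w' j k • (M' j * Q ℓ) = w ℓ k • (P j * M ℓ) := by
    intro j ℓ k
    calc w' j k • (M' j * Q ℓ) = (w' j k • M' j) * Q ℓ := by rw [Matrix.smul_mul]
      _ = (P j * S k) * Q ℓ := by rw [hPS]
      _ = P j * (S k * Q ℓ) := by rw [Matrix.mul_assoc]
      _ = P j * (w ℓ k • M ℓ) := by rw [hSQ]
      _ = w ℓ k • (P j * M ℓ) := by rw [Matrix.mul_smul]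
  have hPSsum : ∀ j k, w' j k • M' j = ∑ ℓ, w ℓ k • (P j * M ℓ) := by
    intro j k
    rw [← hPS j k, hS k, Matrix.mul_sum]
    exact Finset.sum_congr rfl fun ℓ _ => Matrix.mul_smul _ _ _
  have hexist : ∀ j, ∃ ℓ, P j * M ℓ ≠ 0 := by
    intro j
    by_contra hcon
    push_neg at hcon
    obtain ⟨k1, hk1⟩ := hwk' j
    have h1 := hPSsum j k1
    rw [Finset.sum_eq_zero (fun ℓ _ => by rw [hcon ℓ, smul_zero])] at h1
    exact hM0' j ((smul_eq_zero.mp h1).resolve_left hk1)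
  have hcoll : ∀ j ℓ, P j * M ℓ ≠ 0 → ∃ c : K, c ≠ 0 ∧ w ℓ = c • w' j := by
    intro j ℓ hne
    have hab : ∃ a b, (P j * M ℓ) a b ≠ 0 := by
      by_contra hcon
      push_neg at hcon
      exact hne (Matrix.ext fun a b => hcon a b)
    obtain ⟨a, b, hab⟩ := hab
    have hwc : w ℓ = ((M' j * Q ℓ) a b / (P j * M ℓ) a b) • w' j := by
      funext k
      have h1 : (w' j k • (M' j * Q ℓ)) a b = (w ℓ k • (P j * M ℓ)) a b := by
        rw [hkey j ℓ k]
      simp only [Matrix.smul_apply, smul_eq_mul] at h1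
      simp only [Pi.smul_apply, smul_eq_mul]
      rw [div_mul_eq_mul_div, eq_div_iff hab, ← h1]
      ring
    refine ⟨_, ?_, hwc⟩
    intro hc0
    apply hw0 ℓ
    rw [hwc, hc0, zero_smul]
  choose π hπ using hexist
  have huniq : ∀ j (ℓ1 ℓ2 : Fin q), P j * M ℓ1 ≠ 0 → P j * M ℓ2 ≠ 0 → ℓ1 = ℓ2 := by
    intro j ℓ1 ℓ2 h1 h2
    by_contra hne
    obtain ⟨c1, hc1, hw1⟩ := hcoll j ℓ1 h1
    obtain ⟨c2, hc2, hw2⟩ := hcoll j ℓ2 h2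
    have h3 : w ℓ2 = (c2 / c1) • w ℓ1 := by
      rw [hw1, hw2, smul_smul]
      congr 1
      field_simp
    exact hwnc ℓ1 ℓ2 hne (c2 / c1) h3
  have hall0 : ∀ j ℓ, ℓ ≠ π j → P j * M ℓ = 0 := by
    intro j ℓ h
    by_contra hne
    exact h (huniq j ℓ (π j) hne (hπ j))
  have hsumP : ∀ ℓ, ∑ j, P j * M ℓ = M ℓ := by
    intro ℓ
    ext a b
    have hcb : (fun a' => M ℓ a' b) ∈ (⨆ j, colSpace (M' j)) := by
      have heq : (fun a' => M ℓ a' b) = (M ℓ) *ᵥ Pi.single b 1 := by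
        funext a'; simp [Matrix.mulVec_single]
      rw [heq]
      exact hVleV' ℓ ⟨Pi.single b 1, rfl⟩
    have h2 := hP2 (fun a' => M ℓ a' b) hcb
    calc (∑ j, P j * M ℓ) a b = ∑ j, ((P j).mulVec (fun a' => M ℓ a' b)) a := by
          rw [Matrix.sum_apply]
          refine Finset.sum_congr rfl fun j _ => ?_
          simp [Matrix.mul_apply, Matrix.mulVec, dotProduct]
      _ = (∑ j, (P j).mulVec (fun a' => M ℓ a' b)) a := by rw [Finset.sum_apply]
      _ = M ℓ a b := by rw [h2]
  have hπsurj : Function.Surjective π := by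
    intro ℓ
    by_contra hcon
    push_neg at hcon
    have h0 : M ℓ = 0 := by
      rw [← hsumP ℓ]
      exact Finset.sum_eq_zero fun j _ => hall0 j ℓ (Ne.symm (hcon j))
    exact hM0 ℓ h0
  have hπinj : Function.Injective π := by
    intro j1 j2 hj
    by_contra hne
    obtain ⟨c1, hc1, hw1⟩ := hcoll j1 (π j1) (hπ j1)
    obtain ⟨c2, hc2, hw2⟩ := hcoll j2 (π j2) (hπ j2)
    rw [hj] at hw1
    have h3 : c2 • w' j2 = c1 • w' j1 := by rw [← hw1, ← hw2]
    have h4 : w' j2 = (c1 / c2) • w' j1 := by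
      calc w' j2 = (c2⁻¹ * c2) • w' j2 := by rw [inv_mul_cancel₀ hc2, one_smul]
        _ = c2⁻¹ • (c2 • w' j2) := by rw [mul_smul]
        _ = c2⁻¹ • (c1 • w' j1) := by rw [h3]
        _ = (c1 / c2) • w' j1 := by rw [smul_smul]; congr 1; field_simp
    exact hwnc' j1 j2 hne (c1 / c2) h4
  refine ⟨Equiv.ofBijective π ⟨hπinj, hπsurj⟩, fun j => ?_⟩
  obtain ⟨c, hc, hwc⟩ := hcoll j (π j) (hπ j)
  have hPjM : P j * M (π j) = M (π j) := by
    have h1 := hsumP (π j)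
    rw [Finset.sum_eq_single j] at h1
    · exact h1
    · intro j' _ hj'
      refine hall0 j' (π j) fun h => hj' ?_
      exact hπinj h.symm
    · simp
  have hM'j : M' j = c • M (π j) := by
    obtain ⟨k1, hk1⟩ := hwk' j
    have h1 := hPSsum j k1
    rw [Finset.sum_eq_single (π j)] at h1
    · rw [hPjM, hwc] at h1
      simp only [Pi.smul_apply, smul_eq_mul] at h1
      have h2 : M' j = (w' j k1)⁻¹ • (w' j k1 • M' j) := by
        rw [smul_smul, inv_mul_cancel₀ hk1, one_smul]
      rw [h2, h1, smul_smul, mul_comm c, ← mul_assoc, inv_mul_cancel₀ hk1, one_mul]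
    · intro ℓ' _ hℓ'
      rw [hall0 j ℓ' hℓ', smul_zero]
    · simp
  show (fun a b cc => M' j a b * w' j cc) = fun a b cc => M (π j) a b * w (π j) cc
  funext a b cc
  rw [hM'j, hwc]
  simp only [Matrix.smul_apply, Pi.smul_apply, smul_eq_mul]
  ring
end

section
/- Conversely, if T = Σ_{i=1}^r uᵢ⊗vᵢ⊗wᵢ with the uᵢ linearly independent, the vᵢ linearly independent, and every wᵢ nonzero, then T has a matrix-vector decomposition T = Σ_{ℓ=1}^q M_ℓ ⊗ w'_ℓ in which the spaces Im(M_ℓ) are in direct sum, the spaces Im(M_ℓᵀ) are in direct sum, r = Σ_ℓ rank(M_ℓ), and {w'₁,…,w'_q} ⊆ {w₁,…,w_r}. -/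
open Matrix BigOperators Polynomial

variable {K : Type*} [Field K]

lemma exists_dual_vec {n r : ℕ} {v : Fin r → Fin n → K}
    (hv : LinearIndependent K v) (i0 : Fin r) :
    ∃ x : Fin n → K, ∀ i, (∑ b, v i b * x b) = if i = i0 then 1 else 0 := by
  classical
  have hs : LinearIndepOn K id (Set.range v) := (linearIndepOn_id_range_iff hv.injective).mpr hv
  have hsub : Set.range v ⊆ hs.extend (Set.subset_univ _) := hs.subset_extend _
  let B := Module.Basis.extend hs
  let f : (Fin n → K) →ₗ[K] K := B.coord ⟨v i0, hsub ⟨i0, rfl⟩⟩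
  refine ⟨fun b => f (Pi.single b 1), fun i => ?_⟩
  have hvi : v i = ∑ b, (v i b) • (Pi.single b 1 : Fin n → K) := by
    ext a
    simp [Pi.single_apply, mul_ite, Finset.sum_apply]
  have h1 : f (v i) = (∑ b, v i b * f (Pi.single b 1)) := by
    conv_lhs => rw [hvi]
    rw [map_sum]
    simp [smul_eq_mul]
  rw [← h1]
  have hvB : v i = B ⟨v i, hsub ⟨i, rfl⟩⟩ := (Module.Basis.extend_apply_self hs ⟨v i, _⟩).symm
  rw [hvB]
  show B.coord _ (B _) = _
  rw [Module.Basis.coord_apply, Module.Basis.repr_self, Finsupp.single_apply]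
  by_cases h : i = i0
  · subst h; simp
  · rw [if_neg, if_neg h]
    intro hco
    exact h (hv.injective (Subtype.ext_iff.mp hco))

lemma colSpace_sum_outer {m n r : ℕ} (S : Finset (Fin r)) (c : Fin r → K)
    (hc : ∀ i, c i ≠ 0) (u : Fin r → Fin m → K) {v : Fin r → Fin n → K}
    (hv : LinearIndependent K v) :
    colSpace (Matrix.of fun a b => ∑ i ∈ S, c i * u i a * v i b) =
      Submodule.span K (Set.range fun i : {i : Fin r // i ∈ S} => u i) := by
  apply le_antisymm
  · rintro y ⟨x, rfl⟩
    have hy : (Matrix.of fun a b => ∑ i ∈ S, c i * u i a * v i b).mulVecLin x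
        = ∑ i ∈ S, (c i * ∑ b, v i b * x b) • u i := by
      ext a
      simp only [Matrix.mulVecLin_apply, Matrix.mulVec, dotProduct, Matrix.of_apply,
        Finset.sum_apply, Pi.smul_apply, smul_eq_mul, Finset.sum_mul, Finset.mul_sum]
      rw [Finset.sum_comm]
      apply Finset.sum_congr rfl
      intro i _
      apply Finset.sum_congr rfl
      intro b _
      ring
    rw [hy]
    exact Submodule.sum_mem _ fun i hi => Submodule.smul_mem _ _
      (Submodule.subset_span ⟨⟨i, hi⟩, rfl⟩)
  · rw [Submodule.span_le]
    rintro _ ⟨⟨i0, hi0⟩, rfl⟩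
    obtain ⟨x, hx⟩ := exists_dual_vec hv i0
    refine ⟨(c i0)⁻¹ • x, ?_⟩
    ext a
    simp only [Matrix.mulVecLin_apply, Matrix.mulVec, dotProduct, Matrix.of_apply,
      Pi.smul_apply, smul_eq_mul, Finset.sum_mul]
    rw [Finset.sum_comm]
    have : ∀ i ∈ S, (∑ b, c i * u i a * v i b * ((c i0)⁻¹ * x b))
        = if i = i0 then u i0 a else 0 := by
      intro i _
      have : (∑ b, c i * u i a * v i b * ((c i0)⁻¹ * x b))
          = c i * u i a * (c i0)⁻¹ * ∑ b, v i b * x b := by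
        rw [Finset.mul_sum]
        apply Finset.sum_congr rfl
        intro b _
        ring
      rw [this, hx i]
      by_cases h : i = i0
      · subst h
        rw [if_pos rfl, if_pos rfl, mul_one, mul_comm (c i), mul_assoc,
          mul_inv_cancel₀ (hc i), mul_one]
      · simp [h]
    rw [Finset.sum_congr rfl this, Finset.sum_ite_eq' S i0]
    rw [if_pos hi0]

lemma mem_span_image_finset {m r : ℕ} {u : Fin r → Fin m → K} {S : Finset (Fin r)}
    {x : Fin m → K}
    (hx : x ∈ Submodule.span K (Set.range fun i : {i : Fin r // i ∈ S} => u i)) :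
    ∃ a : Fin r → K, x = ∑ i ∈ S, a i • u i := by
  classical
  rw [Submodule.mem_span_range_iff_exists_fun] at hx
  obtain ⟨cf, hcf⟩ := hx
  refine ⟨fun i => if h : i ∈ S then cf ⟨i, h⟩ else 0, ?_⟩
  rw [← hcf, ← Finset.sum_attach S fun i => (if h : i ∈ S then cf ⟨i, h⟩ else 0) • u i,
    Finset.univ_eq_attach]
  apply Finset.sum_congr rfl
  intro i _
  rw [dif_pos i.2]

lemma directSumFamily_span {m r q' : ℕ} {u : Fin r → Fin m → K} (hu : LinearIndependent K u)
    (S : Fin q' → Finset (Fin r)) (g : Fin r → Fin q')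
    (hS : ∀ ℓ, S ℓ = Finset.univ.filter fun j => g j = ℓ) :
    DirectSumFamily (fun ℓ => Submodule.span K
      (Set.range fun i : {i : Fin r // i ∈ S ℓ} => u i)) := by
  classical
  intro x hx hsum ℓ0
  choose a ha using fun ℓ => mem_span_image_finset (hx ℓ)
  have hmem : ∀ {ℓ i}, i ∈ S ℓ → g i = ℓ := by
    intro ℓ i hi; rw [hS ℓ, Finset.mem_filter] at hi; exact hi.2
  have hsum2 : ∑ i, (fun i => a (g i) i) i • u i = 0 := by
    rw [← Finset.sum_fiberwise_of_maps_to (fun i (_ : i ∈ Finset.univ) => Finset.mem_univ (g i))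
      (fun i => a (g i) i • u i), ← hsum]
    apply Finset.sum_congr rfl
    intro ℓ _
    rw [ha ℓ, ← hS ℓ]
    apply Finset.sum_congr rfl
    intro i hi
    rw [hmem hi]
  have hz := Fintype.linearIndependent_iff.mp hu _ hsum2
  rw [ha ℓ0]
  apply Finset.sum_eq_zero
  intro i hi
  have h1 : a ℓ0 i = a (g i) i := by rw [hmem hi]
  rw [h1, hz i, zero_smul]
theorem rank_one_decomp_to_mv_decomp {m n p r : ℕ}
    (T : Fin m → Fin n → Fin p → K)
    (u : Fin r → Fin m → K) (v : Fin r → Fin n → K) (w : Fin r → Fin p → K)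
    (hT : T = fun a b c => ∑ i, u i a * v i b * w i c)
    (hu : LinearIndependent K u) (hv : LinearIndependent K v)
    (hw : ∀ i, w i ≠ 0) :
    ∃ (q : ℕ) (M : Fin q → Matrix (Fin m) (Fin n) K) (w' : Fin q → Fin p → K),
      IsMVDecomp T M w' ∧
      DirectSumFamily (fun ℓ => colSpace (M ℓ)) ∧
      DirectSumFamily (fun ℓ => colSpace (M ℓ)ᵀ) ∧
      r = (∑ ℓ, (M ℓ).rank) ∧
      (∀ ℓ, ∃ i, w' ℓ = w i) := by
  classical
  letI s : Setoid (Fin r) :=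
    { r := fun i j => ∃ d : K, d ≠ 0 ∧ w j = d • w i
      iseqv := by
        constructor
        · intro i; exact ⟨1, one_ne_zero, (one_smul K (w i)).symm⟩
        · rintro i j ⟨d, hd, hwd⟩
          exact ⟨d⁻¹, inv_ne_zero hd, by rw [hwd, smul_smul, inv_mul_cancel₀ hd, one_smul]⟩
        · rintro i j k ⟨d, hd, hwd⟩ ⟨e, he, hwe⟩
          exact ⟨e * d, mul_ne_zero he hd, by rw [hwe, hwd, smul_smul]⟩ }
  haveI : DecidableEq (Quotient s) := Classical.decEq _
  set q := Fintype.card (Quotient s) with hq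
  set e : Fin q ≃ Quotient s := (Fintype.equivFin (Quotient s)).symm with he
  have hrep : ∀ i : Fin r, ∃ d : K, d ≠ 0 ∧ w i = d • w (Quotient.mk s i).out :=
    fun i => Quotient.exact (Quotient.out_eq (Quotient.mk s i))
  choose d hd0 hdw using hrep
  set g : Fin r → Fin q := fun i => e.symm (Quotient.mk s i) with hg
  set S : Fin q → Finset (Fin r) := fun ℓ => Finset.univ.filter (fun i => g i = ℓ) with hS
  set M : Fin q → Matrix (Fin m) (Fin n) K :=
    fun ℓ => Matrix.of fun a b => ∑ i ∈ S ℓ, d i * u i a * v i b with hM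
  set w' : Fin q → Fin p → K := fun ℓ => w (e ℓ).out with hw'
  have hSmem : ∀ {ℓ i}, i ∈ S ℓ ↔ Quotient.mk s i = e ℓ := by
    intro ℓ i
    simp only [hS, Finset.mem_filter, Finset.mem_univ, true_and, hg, Equiv.symm_apply_eq]
  have hout : ∀ ℓ : Fin q, (e ℓ).out ∈ S ℓ := fun ℓ => hSmem.mpr (Quotient.out_eq _)
  have hwi : ∀ {ℓ i}, i ∈ S ℓ → w i = d i • w' ℓ := by
    intro ℓ i hi
    rw [hdw i, hSmem.mp hi]
  have hcol : ∀ ℓ, colSpace (M ℓ)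
      = Submodule.span K (Set.range fun i : {i : Fin r // i ∈ S ℓ} => u i) :=
    fun ℓ => colSpace_sum_outer (S ℓ) d hd0 u hv
  have hMT : ∀ ℓ, (M ℓ)ᵀ = Matrix.of (fun a b => ∑ i ∈ S ℓ, d i * v i a * u i b) := by
    intro ℓ
    ext a b
    show ∑ i ∈ S ℓ, d i * u i b * v i a = ∑ i ∈ S ℓ, d i * v i a * u i b
    exact Finset.sum_congr rfl fun i _ => by ring
  have hcolT : ∀ ℓ, colSpace (M ℓ)ᵀ
      = Submodule.span K (Set.range fun i : {i : Fin r // i ∈ S ℓ} => v i) := by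
    intro ℓ
    rw [hMT ℓ]
    exact colSpace_sum_outer (S ℓ) d hd0 v hu
  have hrank : ∀ ℓ, (M ℓ).rank = (S ℓ).card := by
    intro ℓ
    show Module.finrank K (LinearMap.range (M ℓ).mulVecLin) = _
    rw [show LinearMap.range (M ℓ).mulVecLin = colSpace (M ℓ) from rfl, hcol ℓ]
    have h5 : Module.finrank K
        (Submodule.span K (Set.range fun i : {i : Fin r // i ∈ S ℓ} => u ↑i))
        = Fintype.card {i : Fin r // i ∈ S ℓ} :=
      finrank_span_eq_card (hu.comp Subtype.val Subtype.val_injective)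
    rw [h5]
    exact Fintype.card_coe _
  refine ⟨q, M, w', ⟨?_, ?_, ?_, ?_⟩, ?_, ?_, ?_, ?_⟩
  · -- M ℓ ≠ 0
    intro ℓ hM0
    have h1 := hrank ℓ
    rw [hM0, Matrix.rank_zero] at h1
    exact Finset.card_ne_zero_of_mem (hout ℓ) h1.symm
  · -- w' ℓ ≠ 0
    intro ℓ; exact hw _
  · -- non-collinear
    intro ℓ ℓ' hne cc hcc
    have hc0 : cc ≠ 0 := by
      rintro rfl
      rw [zero_smul] at hcc
      exact hw _ hcc
    apply hne
    apply e.injective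
    rw [← Quotient.out_eq (e ℓ), ← Quotient.out_eq (e ℓ')]
    exact Quotient.sound ⟨cc, hc0, hcc⟩
  · -- T equality
    rw [hT]
    funext a b cc
    rw [← Finset.sum_fiberwise_of_maps_to (fun i (_ : i ∈ Finset.univ) => Finset.mem_univ (g i))
      (fun i => u i a * v i b * w i cc)]
    apply Finset.sum_congr rfl
    intro ℓ _
    show ∑ i ∈ S ℓ, u i a * v i b * w i cc = (∑ i ∈ S ℓ, d i * u i a * v i b) * w' ℓ cc
    rw [Finset.sum_mul]
    apply Finset.sum_congr rfl
    intro i hi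
    have h2 : w i cc = d i * w' ℓ cc := by rw [hwi hi]; rfl
    rw [h2]; ring
  · -- direct sum cols
    have h3 : (fun ℓ => colSpace (M ℓ)) = fun ℓ => Submodule.span K
        (Set.range fun i : {i : Fin r // i ∈ S ℓ} => u i) := funext hcol
    rw [h3]
    exact directSumFamily_span hu S g fun ℓ => rfl
  · -- direct sum rows
    have h3 : (fun ℓ => colSpace (M ℓ)ᵀ) = fun ℓ => Submodule.span K
        (Set.range fun i : {i : Fin r // i ∈ S ℓ} => v i) := funext hcolT
    rw [h3]
    exact directSumFamily_span hv S g fun ℓ => rfl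
  · -- rank sum
    have h4 := Finset.card_eq_sum_card_fiberwise
      (fun i (_ : i ∈ (Finset.univ : Finset (Fin r))) => Finset.mem_univ (g i))
    rw [Finset.card_univ, Fintype.card_fin] at h4
    rw [h4]
    apply Finset.sum_congr rfl
    intro ℓ _
    rw [hrank ℓ]
  · -- w' from w
    intro ℓ; exact ⟨(e ℓ).out, rfl⟩
end

section
/- Let A = UA'Vᵀ and B = UB'Vᵀ where U is m×r, V is n×r, A',B' are r×r, and r ≤ min(m,n). Then every r×r minor of the pencil A − λB (as a polynomial in λ) is a scalar multiple of det(A' − λB'). -/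
open Matrix BigOperators Polynomial

variable {K : Type*} [Field K]

theorem minors_of_pencil {m n r : ℕ} (hr : r ≤ min m n)
    (U : Matrix (Fin m) (Fin r) K) (V : Matrix (Fin n) (Fin r) K)
    (A' B' : Matrix (Fin r) (Fin r) K)
    (A B : Matrix (Fin m) (Fin n) K)
    (hA : A = U * A' * Vᵀ) (hB : B = U * B' * Vᵀ)
    (f : Fin r → Fin m) (g : Fin r → Fin n) :
    ∃ c : K,
      ((A.map (Polynomial.C) - (Polynomial.X : K[X]) • B.map (Polynomial.C)).submatrix f g).det =
      Polynomial.C c *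
        (A'.map (Polynomial.C) - (Polynomial.X : K[X]) • B'.map (Polynomial.C)).det := by
  subst hA hB
  refine ⟨(U.submatrix f id).det * ((Vᵀ).submatrix id g).det, ?_⟩
  have key : (U * A' * Vᵀ).map (Polynomial.C (R := K)) -
      (Polynomial.X : K[X]) • (U * B' * Vᵀ).map (Polynomial.C) =
      U.map Polynomial.C *
        (A'.map Polynomial.C - (Polynomial.X : K[X]) • B'.map Polynomial.C) *
        (Vᵀ).map Polynomial.C := by
    simp [Matrix.mul_sub, Matrix.sub_mul, Matrix.mul_smul, Matrix.smul_mul, Matrix.map_mul]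
  have hU : ((U.submatrix f id).map (Polynomial.C : K → K[X])).det =
      Polynomial.C (U.submatrix f id).det := by
    rw [← RingHom.mapMatrix_apply, ← RingHom.map_det]
  have hV : (((Vᵀ).submatrix id g).map (Polynomial.C : K → K[X])).det =
      Polynomial.C ((Vᵀ).submatrix id g).det := by
    rw [← RingHom.mapMatrix_apply, ← RingHom.map_det]
  rw [key, Matrix.submatrix_mul _ _ f id g Function.bijective_id,
    Matrix.submatrix_mul _ _ f id id Function.bijective_id,
    Matrix.submatrix_id_id, Matrix.det_mul, Matrix.det_mul,
    Matrix.submatrix_map, Matrix.submatrix_map, hU, hV, _root_.map_mul]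
  ring
end

section
/- Let A = UA'Vᵀ, B = UB'Vᵀ with U ∈ K^{m×r}, V ∈ K^{n×r}, A',B' ∈ K^{r×r}, all of rank r, and r ≤ min(m,n). Let M_a be any r×r submatrix of A of rank r and M_b the matching submatrix of B (same rows and columns). Then λ ∈ K is a nontrivial generalized eigenvalue of the pair (A,B) — i.e., there exists v with Av = λBv and Bv ≠ 0 — if and only if det(M_a − λM_b) = 0. -/
open Matrix BigOperators Polynomial

variable {K : Type*} [Field K]

/-- Full column rank implies injective `mulVec`. -/
lemma aux_inj_of_rank {m r : ℕ} (M : Matrix (Fin m) (Fin r) K) (h : M.rank = r) :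
    Function.Injective M.mulVec := by
  have h1 := LinearMap.finrank_range_add_finrank_ker M.mulVecLin
  rw [show Module.finrank K (LinearMap.range M.mulVecLin) = r from h,
    Module.finrank_fin_fun] at h1
  have hker : LinearMap.ker M.mulVecLin = ⊥ :=
    Submodule.finrank_eq_zero.mp (by omega)
  have := LinearMap.ker_eq_bot.mp hker
  exact this

/-- Full row rank implies surjective `mulVec`. -/
lemma aux_surj_of_rank {n r : ℕ} (M : Matrix (Fin r) (Fin n) K) (h : M.rank = r) :
    Function.Surjective M.mulVec := by
  have hrange : LinearMap.range M.mulVecLin = ⊤ :=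
    Submodule.eq_top_of_finrank_eq (by rw [show Module.finrank K (LinearMap.range M.mulVecLin) = r from h, Module.finrank_fin_fun])
  have := LinearMap.range_eq_top.mp hrange
  exact this

/-- Full rank square matrix has nonzero determinant. -/
lemma aux_det_ne_zero_of_rank {r : ℕ} (M : Matrix (Fin r) (Fin r) K) (h : M.rank = r) :
    M.det ≠ 0 := by
  intro hdet
  obtain ⟨v, hv, hv0⟩ := (Matrix.exists_mulVec_eq_zero_iff).mpr hdet
  exact hv (aux_inj_of_rank M h (by simpa [Matrix.mulVec_zero] using hv0))

theorem nontrivial_eigenvalues_of_pencil {m n r : ℕ} (hr : r ≤ min m n)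
    (U : Matrix (Fin m) (Fin r) K) (V : Matrix (Fin n) (Fin r) K)
    (A' B' : Matrix (Fin r) (Fin r) K)
    (hU : U.rank = r) (hV : V.rank = r) (hA' : A'.rank = r) (hB' : B'.rank = r)
    (A B : Matrix (Fin m) (Fin n) K)
    (hA : A = U * A' * Vᵀ) (hB : B = U * B' * Vᵀ)
    (f : Fin r → Fin m) (g : Fin r → Fin n)
    (hsub : (A.submatrix f g).rank = r) :
    ∀ lam : K,
      (∃ x : Fin n → K, A.mulVec x = lam • B.mulVec x ∧ B.mulVec x ≠ 0) ↔
      (A.submatrix f g - lam • B.submatrix f g).det = 0 := by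
  intro lam
  -- injectivity / surjectivity facts
  have injU : Function.Injective U.mulVec := aux_inj_of_rank U hU
  have injB' : Function.Injective B'.mulVec := aux_inj_of_rank B' hB'
  have surjVt : Function.Surjective Vᵀ.mulVec :=
    aux_surj_of_rank Vᵀ (by rw [Matrix.rank_transpose]; exact hV)
  -- submatrix decompositions
  set Uf : Matrix (Fin r) (Fin r) K := U.submatrix f id with hUf
  set Vg : Matrix (Fin r) (Fin r) K := Vᵀ.submatrix id g with hVg
  have hdec : ∀ C : Matrix (Fin r) (Fin r) K,
      (U * C * Vᵀ).submatrix f g = Uf * C * Vg := by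
    intro C
    rw [Matrix.submatrix_mul (U * C) Vᵀ f id g Function.bijective_id,
      Matrix.submatrix_mul U C f id id Function.bijective_id,
      Matrix.submatrix_id_id]
  have hAsub : A.submatrix f g = Uf * A' * Vg := by rw [hA, hdec]
  have hBsub : B.submatrix f g = Uf * B' * Vg := by rw [hB, hdec]
  -- Uf and Vg have nonzero determinants
  have hdetsub : (A.submatrix f g).det ≠ 0 := aux_det_ne_zero_of_rank _ hsub
  rw [hAsub, Matrix.det_mul, Matrix.det_mul] at hdetsub
  have hdetUf : Uf.det ≠ 0 := fun h => hdetsub (by rw [h]; ring)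
  have hdetVg : Vg.det ≠ 0 := fun h => hdetsub (by rw [h]; ring)
  -- pencil submatrix factorization
  have hpencil : A.submatrix f g - lam • B.submatrix f g = Uf * (A' - lam • B') * Vg := by
    rw [hAsub, hBsub, Matrix.mul_sub, Matrix.sub_mul]
    simp [Matrix.mul_smul, Matrix.smul_mul]
  have hdetiff : (A.submatrix f g - lam • B.submatrix f g).det = 0 ↔
      (A' - lam • B').det = 0 := by
    rw [hpencil, Matrix.det_mul, Matrix.det_mul]
    constructor
    · intro h
      rcases mul_eq_zero.mp h with h | h
      · rcases mul_eq_zero.mp h with h | h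
        · exact absurd h hdetUf
        · exact h
      · exact absurd h hdetVg
    · intro h; rw [h]; ring
  rw [hdetiff]
  constructor
  · rintro ⟨x, hx1, hx2⟩
    set y : Fin r → K := Vᵀ.mulVec x with hy
    have hAx : A.mulVec x = U.mulVec (A'.mulVec y) := by
      rw [hA, hy, Matrix.mulVec_mulVec, Matrix.mulVec_mulVec]
    have hBx : B.mulVec x = U.mulVec (B'.mulVec y) := by
      rw [hB, hy, Matrix.mulVec_mulVec, Matrix.mulVec_mulVec]
    have hBy : B'.mulVec y ≠ 0 := by
      intro h; apply hx2; rw [hBx, h, Matrix.mulVec_zero]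
    have hy0 : y ≠ 0 := by
      intro h; apply hBy; rw [h, Matrix.mulVec_zero]
    have key : A'.mulVec y = lam • B'.mulVec y := by
      apply injU
      rw [← hAx, hx1, hBx, Matrix.mulVec_smul]
    rw [← Matrix.exists_mulVec_eq_zero_iff]
    refine ⟨y, hy0, ?_⟩
    rw [Matrix.sub_mulVec, key, Matrix.smul_mulVec, sub_self]
  · intro hdet
    obtain ⟨y, hy0, hy⟩ := Matrix.exists_mulVec_eq_zero_iff.mpr hdet
    rw [Matrix.sub_mulVec, Matrix.smul_mulVec, sub_eq_zero] at hy
    obtain ⟨x, hx⟩ := surjVt y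
    have h1 : A.mulVec x = U.mulVec (A'.mulVec y) := by
      rw [hA, ← Matrix.mulVec_mulVec, ← Matrix.mulVec_mulVec, hx]
    have h2 : B.mulVec x = U.mulVec (B'.mulVec y) := by
      rw [hB, ← Matrix.mulVec_mulVec, ← Matrix.mulVec_mulVec, hx]
    refine ⟨x, ?_, ?_⟩
    · rw [h1, h2, hy, Matrix.mulVec_smul]
    · rw [h2]
      intro h
      apply hy0
      apply injB'
      have : U.mulVec (B'.mulVec y) = U.mulVec 0 := by rw [Matrix.mulVec_zero]; exact h
      rw [injU this, Matrix.mulVec_zero]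
end

section
/- Let M₁,…,M_p be a basis of a subspace V ⊆ K^{m×n}, ordered with nondecreasing ranks, and suppose the subspaces Im(M₁),…,Im(M_p) are in direct sum. Then for every i ≥ 1, the minimum of rank(M) over all M ∈ V \ span(M₁,…,M_{i−1}) equals rank(M_i). -/
open Matrix BigOperators Polynomial

variable {K : Type*} [Field K]

theorem minrank_of_basis {m n p : ℕ}
    (V : Submodule K (Matrix (Fin m) (Fin n) K))
    (M : Fin p → Matrix (Fin m) (Fin n) K)
    (hbasis : LinearIndependent K M) (hspan : V = Submodule.span K (Set.range M))
    (hmono : ∀ i j : Fin p, i ≤ j → (M i).rank ≤ (M j).rank)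
    (hcol : DirectSumFamily (fun ℓ => colSpace (M ℓ))) :
    ∀ i : Fin p,
      IsLeast {s : ℕ | ∃ N, N ∈ V ∧
        N ∉ Submodule.span K (M '' {j : Fin p | j < i}) ∧ N.rank = s} ((M i).rank) := by
  classical
  intro i
  constructor
  · refine ⟨M i, ?_, ?_, rfl⟩
    · rw [hspan]; exact Submodule.subset_span ⟨i, rfl⟩
    · exact hbasis.notMem_span_image (by simp)
  · rintro s ⟨N, hNV, hNspan, rfl⟩
    rw [hspan, Finsupp.mem_span_range_iff_exists_finsupp] at hNV
    obtain ⟨c, hc⟩ := hNV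
    rw [Finsupp.sum_fintype _ _ (by simp)] at hc
    -- find ℓ ≥ i with c ℓ ≠ 0
    have hex : ∃ ℓ, i ≤ ℓ ∧ c ℓ ≠ 0 := by
      by_contra h
      push_neg at h
      apply hNspan
      rw [← hc]
      refine Submodule.sum_mem _ fun ℓ _ => ?_
      by_cases hl : i ≤ ℓ
      · rw [h ℓ hl, zero_smul]; exact Submodule.zero_mem _
      · exact Submodule.smul_mem _ _
          (Submodule.subset_span ⟨ℓ, lt_of_not_ge hl, rfl⟩)
    obtain ⟨ℓ, hiℓ, hcℓ⟩ := hex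
    refine le_trans (hmono i ℓ hiℓ) ?_
    -- quotient by the sum of the other column spaces
    set S : Submodule K (Fin m → K) :=
      ⨆ ℓ' ∈ Finset.univ.erase ℓ, colSpace (M ℓ') with hSdef
    set q := S.mkQ with hq
    have hker : ∀ x ∈ colSpace (M ℓ), x ∈ S → x = 0 := by
      intro x hx hxS
      rw [Submodule.mem_iSup_finset_iff_exists_sum] at hxS
      obtain ⟨μ, hμ⟩ := hxS
      have hy := hcol (fun ℓ' => if ℓ' = ℓ then -x else (μ ℓ' : Fin m → K))
        (fun ℓ' => by
          by_cases hℓ' : ℓ' = ℓ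
          · subst hℓ'; simpa using Submodule.neg_mem _ hx
          · simpa [hℓ'] using (μ ℓ').2)
        (by
          rw [← Finset.sum_erase_add _ _ (Finset.mem_univ ℓ)]
          rw [Finset.sum_congr rfl (fun ℓ' hℓ' =>
            if_neg (Finset.ne_of_mem_erase hℓ'))]
          simp [hμ]) ℓ
      simpa using hy
    -- q ∘ N = c ℓ • (q ∘ M ℓ) as linear maps
    have hcomp : q.comp N.mulVecLin = c ℓ • (q.comp (M ℓ).mulVecLin) := by
      refine LinearMap.ext fun x => ?_
      simp only [LinearMap.comp_apply, LinearMap.smul_apply, mulVecLin_apply]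
      rw [← hc]
      have hsum : (∑ ℓ', c ℓ' • M ℓ') *ᵥ x = ∑ ℓ', c ℓ' • (M ℓ' *ᵥ x) := by
        ext j
        simp only [Matrix.mulVec, dotProduct, Finset.sum_apply, Matrix.sum_apply,
          Matrix.smul_apply, Pi.smul_apply, smul_eq_mul, Finset.sum_mul, Finset.mul_sum,
          mul_assoc]
        rw [Finset.sum_comm]
      rw [hsum, map_sum]
      rw [Finset.sum_eq_single ℓ]
      · simp
      · intro ℓ' _ hne
        have hmem : M ℓ' *ᵥ x ∈ S := by
          apply Submodule.mem_iSup_of_mem ℓ'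
          apply Submodule.mem_iSup_of_mem (Finset.mem_erase.mpr ⟨hne, Finset.mem_univ _⟩)
          exact ⟨x, rfl⟩
        rw [_root_.map_smul,
          show q (M ℓ' *ᵥ x) = 0 from (Submodule.Quotient.mk_eq_zero S).mpr hmem, smul_zero]
      · simp
    -- rank (M ℓ) = finrank of the image of its column space in the quotient
    have hinj : Function.Injective (q.comp (colSpace (M ℓ)).subtype) := by
      rw [← LinearMap.ker_eq_bot, LinearMap.ker_eq_bot']
      rintro ⟨x, hx⟩ hqx
      have : x ∈ S := (Submodule.Quotient.mk_eq_zero S).mp hqx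
      exact Subtype.ext (hker x hx this)
    have hrange : LinearMap.range (q.comp (colSpace (M ℓ)).subtype)
        = Submodule.map q (colSpace (M ℓ)) := by
      rw [LinearMap.range_comp, Submodule.range_subtype]
    have h1 : (M ℓ).rank = Module.finrank K (Submodule.map q (colSpace (M ℓ))) := by
      rw [← hrange, LinearMap.finrank_range_of_inj hinj]
      rfl
    have h2 : Submodule.map q (colSpace (M ℓ))
        = Submodule.map q (LinearMap.range N.mulVecLin) := by
      rw [show Submodule.map q (colSpace (M ℓ)) = LinearMap.range (q.comp (M ℓ).mulVecLin) from
        (LinearMap.range_comp _ _).symm]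
      rw [show Submodule.map q (LinearMap.range N.mulVecLin)
          = LinearMap.range (q.comp N.mulVecLin) from (LinearMap.range_comp _ _).symm]
      rw [hcomp, LinearMap.range_smul _ _ hcℓ]
    calc (M ℓ).rank = Module.finrank K (Submodule.map q (LinearMap.range N.mulVecLin)) := by
          rw [h1, h2]
      _ ≤ Module.finrank K (LinearMap.range N.mulVecLin) := Submodule.finrank_map_le _ _
      _ = N.rank := rfl
end
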